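/- arXiv:2108.09854 — 2 statements merged into one kernel-verified Lean document; each statement's English description precedes it below -/
import Mathlib

section
/- Let 1/2 < τ ≤ 1 and let (p_{-j})_{j≥1} satisfy 0 < p_{-j} ≤ 1/2 and n^{-1} Σ_{j=1}^{n} p_{-j}^{-1} = 2 + o(n^{-τ}) as n → ∞ (i.e. γ2 = 1). Let {G_i^{(-j)} : i ≥ 1, j ≥ 1} be a double array of independent geometric random variables with P(G_i^{(-j)} = k) = 2p_{-j}(1 − 2p_{-j})^k, and set r_N = ⌊N^{1/2} log N⌋. Then for every δ > 0, almost surely for all sufficiently large N, Σ_{j=1}^{r_N} Σ_{i=1}^{r_N} G_i^{(-j)} ≤ N^{1 − τ/2 + δ}. -/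
open MeasureTheory ProbabilityTheory Filter Asymptotics

noncomputable section

/-- A standard Wiener process (Brownian motion): continuous paths, `W 0 = 0`,
Gaussian increments, independent increments. -/
def IsStandardWiener {Ω : Type*} [MeasureSpace Ω] (W : ℝ → Ω → ℝ) : Prop :=
  (∀ ω, Continuous fun t => W t ω) ∧
  (∀ ω, W 0 ω = 0) ∧
  (∀ t, Measurable (W t)) ∧
  (∀ s t : ℝ, 0 ≤ s → s ≤ t →
    Measure.map (fun ω => W t ω - W s ω) ℙ = gaussianReal 0 (Real.toNNReal (t - s))) ∧
  (∀ (n : ℕ) (t : ℕ → ℝ), (∀ i, 0 ≤ t i) → Monotone t →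
    iIndepFun
      (fun (i : Fin n) (ω : Ω) => W (t (i.1 + 1)) ω - W (t i.1) ω) ℙ)

/-- Independence of two processes: the σ-algebras they generate are independent. -/
def IndepProcess {Ω : Type*} [MeasureSpace Ω] (W1 W2 : ℝ → Ω → ℝ) : Prop :=
  Indep (⨆ t : ℝ, MeasurableSpace.comap (W1 t) inferInstance)
        (⨆ t : ℝ, MeasurableSpace.comap (W2 t) inferInstance) ℙ

/-- `A₂(t) = γ₁ ∫₀ᵗ 1{w(s) ≥ 0} ds + γ₂ ∫₀ᵗ 1{w(s) < 0} ds` for a path `w`. -/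
def A2fun (γ1 γ2 : ℝ) (w : ℝ → ℝ) (t : ℝ) : ℝ :=
  γ1 * (volume {s : ℝ | s ∈ Set.Icc 0 t ∧ 0 ≤ w s}).toReal +
  γ2 * (volume {s : ℝ | s ∈ Set.Icc 0 t ∧ w s < 0}).toReal

/-- The averaged condition (1.1) on the vertical step probabilities. -/
def AveragedCond (p : ℤ → ℝ) (γ1 γ2 τ : ℝ) : Prop :=
  (∀ j : ℤ, 0 < p j ∧ p j ≤ 1/2) ∧ (∃ j : ℤ, p j < 1/2) ∧
  ((fun n : ℕ => (n : ℝ)⁻¹ * (∑ j ∈ Finset.Icc 1 n, (p (j : ℤ))⁻¹) - 2 * γ1)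
    =o[atTop] fun n : ℕ => (n : ℝ) ^ (-τ)) ∧
  ((fun n : ℕ => (n : ℝ)⁻¹ * (∑ j ∈ Finset.Icc 1 n, (p (-(j : ℤ)))⁻¹) - 2 * γ2)
    =o[atTop] fun n : ℕ => (n : ℝ) ^ (-τ))

/-- The anisotropic random walk on ℤ² started at the origin, with horizontal step
probabilities `1/2 - p j` and vertical step probabilities `p j` on level `j`. -/
def IsAnisotropicRW {Ω : Type*} [MeasureSpace Ω] (p : ℤ → ℝ) (C : ℕ → Ω → ℤ × ℤ) : Prop :=
  (∀ ω, C 0 ω = (0, 0)) ∧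
  (∀ N, Measurable (C N)) ∧
  (∀ (N : ℕ) (path : ℕ → ℤ × ℤ) (k j : ℤ), path N = (k, j) →
    (ℙ {ω | (∀ n ≤ N, C n ω = path n) ∧ C (N + 1) ω = (k + 1, j)}
        = ENNReal.ofReal (1/2 - p j) * ℙ {ω | ∀ n ≤ N, C n ω = path n}) ∧
    (ℙ {ω | (∀ n ≤ N, C n ω = path n) ∧ C (N + 1) ω = (k - 1, j)}
        = ENNReal.ofReal (1/2 - p j) * ℙ {ω | ∀ n ≤ N, C n ω = path n}) ∧
    (ℙ {ω | (∀ n ≤ N, C n ω = path n) ∧ C (N + 1) ω = (k, j + 1)}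
        = ENNReal.ofReal (p j) * ℙ {ω | ∀ n ≤ N, C n ω = path n}) ∧
    (ℙ {ω | (∀ n ≤ N, C n ω = path n) ∧ C (N + 1) ω = (k, j - 1)}
        = ENNReal.ofReal (p j) * ℙ {ω | ∀ n ≤ N, C n ω = path n}))

/-- A simple symmetric random walk on ℤ. -/
def IsSSRW {Ω : Type*} [MeasureSpace Ω] (S : ℕ → Ω → ℤ) : Prop :=
  (∀ ω, S 0 ω = 0) ∧
  (∀ n, Measurable (S n)) ∧
  (iIndepFun (fun (n : ℕ) (ω : Ω) => S (n + 1) ω - S n ω) ℙ) ∧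
  (∀ n : ℕ, ℙ {ω | S (n + 1) ω - S n ω = 1} = 1/2 ∧ ℙ {ω | S (n + 1) ω - S n ω = -1} = 1/2)

/-- Local time of a walk: `ξ(j,n) = #{k : 0 < k ≤ n, S k = j}`. -/
def localTimeRW {Ω : Type*} (S : ℕ → Ω → ℤ) (j : ℤ) (n : ℕ) (ω : Ω) : ℕ :=
  ((Finset.Icc 1 n).filter fun k => S k ω = j).card

lemma geo_exp {Ω : Type*} [MeasureSpace Ω] [IsProbabilityMeasure (ℙ : Measure Ω)]
    (g : Ω → ℕ) (hg : Measurable g) (α : ℝ) (hα0 : 0 < α) (hα1 : α ≤ 1)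
    (hlaw : ∀ k : ℕ, ℙ {ω | g ω = k} = ENNReal.ofReal (α * (1 - α) ^ k)) :
    ∫⁻ ω, (g ω : ENNReal) ∂ℙ = ENNReal.ofReal (1 / α - 1) := by
  have hr0 : (0:ℝ) ≤ 1 - α := by linarith
  have hr1 : ‖(1 - α : ℝ)‖ < 1 := by rw [Real.norm_eq_abs, abs_of_nonneg hr0]; linarith
  have hmap : ∀ k : ℕ, (Measure.map g ℙ) {k} = ENNReal.ofReal (α * (1 - α) ^ k) := by
    intro k
    rw [Measure.map_apply hg (measurableSet_singleton k)]
    have : g ⁻¹' {k} = {ω | g ω = k} := rfl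
    rw [this, hlaw]
  have h1 : ∫⁻ ω, (g ω : ENNReal) ∂ℙ = ∫⁻ n, (n : ENNReal) ∂(Measure.map g ℙ) :=
    (lintegral_map measurable_from_top hg).symm
  rw [h1, lintegral_countable' (fun n : ℕ => (n : ENNReal))]
  have h2 : ∀ n : ℕ, (n : ENNReal) * (Measure.map g ℙ) {n}
      = ENNReal.ofReal ((n : ℝ) * (α * (1 - α) ^ n)) := by
    intro n
    rw [hmap n, ← ENNReal.ofReal_natCast n, ← ENNReal.ofReal_mul (Nat.cast_nonneg n)]
  simp_rw [h2]
  have hnn : ∀ n : ℕ, 0 ≤ (n : ℝ) * (α * (1 - α) ^ n) := fun n =>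
    mul_nonneg (Nat.cast_nonneg n) (mul_nonneg hα0.le (pow_nonneg hr0 n))
  have hsum0 : Summable (fun n : ℕ => (n : ℝ) * (1 - α) ^ n) := by
    simpa using summable_pow_mul_geometric_of_norm_lt_one 1 hr1
  have hsum : Summable (fun n : ℕ => (n : ℝ) * (α * (1 - α) ^ n)) := by
    refine (hsum0.mul_left α).congr fun n => by ring
  rw [← ENNReal.ofReal_tsum_of_nonneg hnn hsum]
  congr 1
  have : (fun n : ℕ => (n : ℝ) * (α * (1 - α) ^ n)) = fun n : ℕ => α * ((n : ℝ) * (1 - α) ^ n) := by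
    funext n; ring
  rw [this, tsum_mul_left, tsum_coe_mul_geometric_of_norm_lt_one hr1]
  have h1a : (1 : ℝ) - (1 - α) = α := by ring
  rw [h1a]
  field_simp

/-- **Estimate (3.7)/(3.9).** Let `1/2 < τ ≤ 1` and `0 < p_{-j} ≤ 1/2` with
`n⁻¹ Σ_{j=1}^n p_{-j}⁻¹ = 2 + o(n^{-τ})` (the case `γ₂ = 1`). For a double array of
independent geometric variables `G_i^{(-j)}` with parameters `2p_{-j}` and
`r_N = ⌊N^{1/2} log N⌋`, for every `δ > 0`, almost surely
`Σ_{j=1}^{r_N} Σ_{i=1}^{r_N} G_i^{(-j)} ≤ N^{1 - τ/2 + δ}` for all large `N`. -/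
theorem geometric_negative_side_bound
    {Ω : Type*} [MeasureSpace Ω] [IsProbabilityMeasure (ℙ : Measure Ω)]
    (τ : ℝ) (hτ1 : 1/2 < τ) (hτ2 : τ ≤ 1)
    (q : ℕ → ℝ) (hq : ∀ j : ℕ, 0 < q j ∧ q j ≤ 1/2)
    (hav : (fun n : ℕ => (n : ℝ)⁻¹ * (∑ j ∈ Finset.Icc 1 n, (q j)⁻¹) - 2)
      =o[atTop] fun n : ℕ => (n : ℝ) ^ (-τ))
    (G : ℕ → ℕ → Ω → ℕ)
    (hGmeas : ∀ (j i : ℕ), Measurable (G j i))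
    (hGgeom : ∀ (j i k : ℕ),
      ℙ {ω | G j i ω = k} = ENNReal.ofReal (2 * q j * (1 - 2 * q j) ^ k))
    (hGindep : iIndepFun (fun (ji : ℕ × ℕ) ω => G ji.1 ji.2 ω) ℙ) :
    ∀ δ > (0 : ℝ), ∀ᵐ ω ∂(ℙ : Measure Ω), ∀ᶠ N : ℕ in atTop,
      (∑ j ∈ Finset.Icc 1 (⌊(N : ℝ) ^ ((1 : ℝ)/2) * Real.log N⌋₊),
        ∑ i ∈ Finset.Icc 1 (⌊(N : ℝ) ^ ((1 : ℝ)/2) * Real.log N⌋₊), (G j i ω : ℝ))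
        ≤ (N : ℝ) ^ (1 - τ/2 + δ) := by
  intro δ hδ
  -- basic positivity facts
  have hτ0 : 0 < τ := by linarith
  have he : (0:ℝ) < 1 - τ/2 + δ := by linarith
  -- the floor radius
  set r : ℕ → ℕ := fun N => ⌊(N : ℝ) ^ ((1 : ℝ)/2) * Real.log N⌋₊ with hrdef
  -- monotonicity of r
  have hgnn : ∀ N : ℕ, 0 ≤ (N : ℝ) ^ ((1 : ℝ)/2) * Real.log N := by
    intro N
    rcases Nat.eq_zero_or_pos N with h0 | h1
    · simp [h0]
    · exact mul_nonneg (Real.rpow_nonneg (Nat.cast_nonneg N) _)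
        (Real.log_nonneg (by exact_mod_cast h1))
  have hrmono : Monotone r := by
    intro m n hmn
    apply Nat.floor_mono
    rcases Nat.eq_zero_or_pos m with h0 | h1
    · simp only [h0, Nat.cast_zero]
      rw [Real.zero_rpow (by norm_num), zero_mul]
      exact hgnn n
    · have h1n : (1:ℝ) ≤ m := by exact_mod_cast h1
      have hc : (m:ℝ) ≤ n := by exact_mod_cast hmn
      refine mul_le_mul (Real.rpow_le_rpow (by positivity) hc (by norm_num))
        (Real.log_le_log (by linarith) hc) (Real.log_nonneg h1n)
        (Real.rpow_nonneg (by positivity) _)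
  -- the ENNReal-valued double sum
  set F : ℕ → Ω → ENNReal := fun N ω =>
    ∑ j ∈ Finset.Icc 1 (r N), ∑ i ∈ Finset.Icc 1 (r N), (G j i ω : ENNReal) with hFdef
  have hcast : ∀ j i : ℕ, Measurable fun ω => ((G j i ω : ℕ) : ENNReal) :=
    fun j i => measurable_from_top.comp (hGmeas j i)
  have hFmeas : ∀ N, Measurable (F N) := by
    intro N
    exact Finset.measurable_sum _ fun j _ =>
      Finset.measurable_sum _ fun i _ => hcast j i
  -- expectation of each G j i
  have hexp : ∀ j i : ℕ, ∫⁻ ω, (G j i ω : ENNReal) ∂ℙ = ENNReal.ofReal (1/(2 * q j) - 1) := by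
    intro j i
    exact geo_exp (G j i) (hGmeas j i) (2 * q j) (by linarith [(hq j).1])
      (by linarith [(hq j).2]) (hGgeom j i)
  have hmnn : ∀ j : ℕ, 0 ≤ 1/(2 * q j) - 1 := by
    intro j
    have h1 : 0 < 2 * q j := by linarith [(hq j).1]
    have h2 : 2 * q j ≤ 1 := by linarith [(hq j).2]
    have := (one_le_div h1).2 h2
    linarith [this]
  -- expectation of F N
  have hEF : ∀ N, ∫⁻ ω, F N ω ∂ℙ
      = ENNReal.ofReal ((r N : ℝ) * ((∑ j ∈ Finset.Icc 1 (r N), (q j)⁻¹) / 2 - r N)) := by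
    intro N
    rw [hFdef]
    simp only
    rw [lintegral_finset_sum _ (fun j _ =>
      Finset.measurable_sum _ fun i _ => hcast j i)]
    have step : ∀ j ∈ Finset.Icc 1 (r N),
        ∫⁻ ω, (∑ i ∈ Finset.Icc 1 (r N), (G j i ω : ENNReal)) ∂ℙ
          = ENNReal.ofReal ((r N : ℝ) * (1/(2 * q j) - 1)) := by
      intro j _
      rw [lintegral_finset_sum _ (fun i _ => hcast j i)]
      simp_rw [hexp j]
      rw [Finset.sum_const, Nat.card_Icc]
      simp only [Nat.add_sub_cancel]
      rw [nsmul_eq_mul, ← ENNReal.ofReal_natCast (r N),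
        ← ENNReal.ofReal_mul (Nat.cast_nonneg _)]
    rw [Finset.sum_congr rfl step]
    rw [← ENNReal.ofReal_sum_of_nonneg (fun j _ =>
      mul_nonneg (Nat.cast_nonneg _) (hmnn j))]
    congr 1
    rw [← Finset.mul_sum]
    congr 1
    rw [Finset.sum_sub_distrib, Finset.sum_const, Nat.card_Icc]
    simp only [Nat.add_sub_cancel, nsmul_eq_mul, mul_one]
    congr 1
    rw [Finset.sum_div]
    refine Finset.sum_congr rfl fun j _ => ?_
    have := (hq j).1.ne'
    field_simp
  -- the averaged condition gives a bound on partial sums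
  have hS : ∃ n₀ : ℕ, 1 ≤ n₀ ∧ ∀ n : ℕ, n₀ ≤ n →
      (∑ j ∈ Finset.Icc 1 n, (q j)⁻¹) / 2 - n ≤ (n : ℝ) ^ ((1:ℝ) - τ) := by
    have hb := hav.def one_pos
    rw [eventually_atTop] at hb
    obtain ⟨n₀', hn₀'⟩ := hb
    refine ⟨max n₀' 1, le_max_right _ _, fun n hn => ?_⟩
    have hn1 : 1 ≤ n := le_trans (le_max_right _ _) hn
    have hnp : (0:ℝ) < n := by exact_mod_cast hn1
    have h := hn₀' n (le_trans (le_max_left _ _) hn)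
    rw [Real.norm_eq_abs, Real.norm_eq_abs, one_mul,
      abs_of_nonneg (Real.rpow_nonneg hnp.le _)] at h
    have h2 := (abs_le.1 h).2
    have h3 : (∑ j ∈ Finset.Icc 1 n, (q j)⁻¹) ≤ n * (2 + (n:ℝ) ^ (-τ)) := by
      have h4 : (n:ℝ)⁻¹ * (∑ j ∈ Finset.Icc 1 n, (q j)⁻¹) ≤ 2 + (n:ℝ) ^ (-τ) := by linarith
      calc (∑ j ∈ Finset.Icc 1 n, (q j)⁻¹)
          = n * ((n:ℝ)⁻¹ * (∑ j ∈ Finset.Icc 1 n, (q j)⁻¹)) := by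
            field_simp
        _ ≤ n * (2 + (n:ℝ) ^ (-τ)) := by
            exact mul_le_mul_of_nonneg_left h4 hnp.le
    have h5 : (n:ℝ) * (n:ℝ) ^ (-τ) = (n:ℝ) ^ ((1:ℝ) - τ) := by
      rw [show (1:ℝ) - τ = 1 + (-τ) by ring, Real.rpow_add hnp, Real.rpow_one]
    nlinarith [Real.rpow_nonneg hnp.le ((1:ℝ) - τ)]
  obtain ⟨n₀, hn₀1, hn₀⟩ := hS
  -- log bound eventually
  have hlogev : ∀ᶠ N : ℕ in atTop, Real.log N ≤ (N : ℝ) ^ (δ/8) := by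
    have h := (isLittleO_log_rpow_atTop (by linarith : (0:ℝ) < δ/8)).def one_pos
    have h2 := (tendsto_natCast_atTop_atTop (R := ℝ)).eventually h
    filter_upwards [h2, eventually_ge_atTop 1] with N hN hN1
    have hNp : (0:ℝ) < N := by exact_mod_cast hN1
    rw [Real.norm_eq_abs, Real.norm_eq_abs, one_mul,
      abs_of_nonneg (Real.rpow_nonneg hNp.le _)] at hN
    exact le_trans (le_abs_self _) hN
  -- r N → ∞
  have hrtend : Tendsto r atTop atTop := by
    apply tendsto_nat_floor_atTop.comp
    apply Tendsto.atTop_mul_atTop₀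
    · exact (tendsto_rpow_atTop (by norm_num : (0:ℝ) < 1/2)).comp tendsto_natCast_atTop_atTop
    · exact Real.tendsto_log_atTop.comp tendsto_natCast_atTop_atTop
  -- eventual expectation bound
  have hEbound : ∀ᶠ N : ℕ in atTop,
      ∫⁻ ω, F N ω ∂ℙ ≤ ENNReal.ofReal ((N : ℝ) ^ (1 - τ/2 + δ/4)) := by
    filter_upwards [hlogev, hrtend.eventually_ge_atTop n₀, eventually_ge_atTop 1]
      with N hlog hrN hN1
    rw [hEF N]
    apply ENNReal.ofReal_le_ofReal
    have hN1' : (1:ℝ) ≤ N := by exact_mod_cast hN1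
    have hrN1 : 1 ≤ r N := le_trans hn₀1 hrN
    have hrpos : (0:ℝ) < r N := by exact_mod_cast hrN1
    have h1 : (∑ j ∈ Finset.Icc 1 (r N), (q j)⁻¹) / 2 - r N ≤ (r N : ℝ) ^ ((1:ℝ) - τ) :=
      hn₀ (r N) hrN
    have hrle : (r N : ℝ) ≤ (N:ℝ) ^ ((1:ℝ)/2 + δ/8) := by
      have hfl : (r N : ℝ) ≤ (N : ℝ) ^ ((1 : ℝ)/2) * Real.log N := Nat.floor_le (hgnn N)
      have h6 : (N : ℝ) ^ ((1 : ℝ)/2) * Real.log N ≤ (N : ℝ) ^ ((1 : ℝ)/2) * (N:ℝ) ^ (δ/8) :=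
        mul_le_mul_of_nonneg_left hlog (Real.rpow_nonneg (by linarith) _)
      rw [← Real.rpow_add (by linarith : (0:ℝ) < N)] at h6
      linarith
    calc (r N : ℝ) * ((∑ j ∈ Finset.Icc 1 (r N), (q j)⁻¹) / 2 - r N)
        ≤ (r N : ℝ) * (r N : ℝ) ^ ((1:ℝ) - τ) :=
          mul_le_mul_of_nonneg_left h1 hrpos.le
      _ = (r N : ℝ) ^ ((2:ℝ) - τ) := by
          rw [show (2:ℝ) - τ = 1 + (1 - τ) by ring, Real.rpow_add hrpos, Real.rpow_one]
      _ ≤ ((N:ℝ) ^ ((1:ℝ)/2 + δ/8)) ^ ((2:ℝ) - τ) :=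
          Real.rpow_le_rpow hrpos.le hrle (by linarith)
      _ = (N:ℝ) ^ (((1:ℝ)/2 + δ/8) * (2 - τ)) := by
          rw [← Real.rpow_mul (by linarith : (0:ℝ) ≤ N)]
      _ ≤ (N:ℝ) ^ (1 - τ/2 + δ/4) := by
          apply Real.rpow_le_rpow_of_exponent_le hN1'
          nlinarith
  obtain ⟨N₂, hN₂⟩ := eventually_atTop.1 hEbound
  -- the bad events
  set A : ℕ → Set Ω := fun k =>
    {ω | ENNReal.ofReal (((2:ℝ) ^ k) ^ (1 - τ/2 + δ)) ≤ F (2 ^ (k+1)) ω} with hAdef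
  set w : ℝ := (2:ℝ) ^ (-(3*δ/4)) with hwdef
  have hw0 : 0 < w := Real.rpow_pos_of_pos two_pos _
  have hw1 : w < 1 := Real.rpow_lt_one_of_one_lt_of_neg one_lt_two (by linarith)
  set C : ℝ := (2:ℝ) ^ (1 - τ/2 + δ/4) with hCdef
  have hC0 : 0 < C := Real.rpow_pos_of_pos two_pos _
  -- probability bound for A k
  have hAk : ∀ k : ℕ, N₂ ≤ 2 ^ (k+1) → ℙ (A k) ≤ ENNReal.ofReal (C * w ^ k) := by
    intro k hk
    have hB : (0:ℝ) < ((2:ℝ) ^ k) ^ (1 - τ/2 + δ) :=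
      Real.rpow_pos_of_pos (by positivity) _
    have hM := meas_ge_le_lintegral_div (μ := (ℙ : Measure Ω)) (hFmeas (2 ^ (k+1))).aemeasurable
      (ne_of_gt (ENNReal.ofReal_pos.2 hB)) ENNReal.ofReal_ne_top
      (ε := ENNReal.ofReal (((2:ℝ) ^ k) ^ (1 - τ/2 + δ)))
    refine le_trans hM (le_trans (ENNReal.div_le_div_right (hN₂ _ hk) _) ?_)
    rw [← ENNReal.ofReal_div_of_pos hB]
    apply ENNReal.ofReal_le_ofReal
    have hc : (((2:ℕ) ^ (k+1) : ℕ) : ℝ) = (2:ℝ) ^ (k+1) := by push_cast; ring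
    rw [hc]
    rw [← Real.rpow_natCast (2:ℝ) (k+1), ← Real.rpow_natCast (2:ℝ) k,
      ← Real.rpow_mul (by norm_num : (0:ℝ) ≤ 2), ← Real.rpow_mul (by norm_num : (0:ℝ) ≤ 2),
      ← Real.rpow_sub two_pos]
    have hexp2 : ((k:ℝ)+1) * (1 - τ/2 + δ/4) - (k:ℝ) * (1 - τ/2 + δ)
        = (1 - τ/2 + δ/4) + (k:ℝ) * (-(3*δ/4)) := by ring
    push_cast
    rw [hexp2, Real.rpow_add two_pos, hCdef, hwdef]
    rw [mul_comm (k:ℝ) (-(3*δ/4)), Real.rpow_mul (by norm_num : (0:ℝ) ≤ 2),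
      Real.rpow_natCast]
  -- Borel–Cantelli
  have hK : ∀ k : ℕ, N₂ ≤ 2 ^ (k + N₂ + 1) := by
    intro k
    calc N₂ ≤ 2 ^ N₂ := (Nat.lt_two_pow_self (n := N₂)).le
      _ ≤ 2 ^ (k + N₂ + 1) := Nat.pow_le_pow_right (by norm_num) (by omega)
  have hsummable : Summable (fun k : ℕ => C * w ^ (k + N₂)) := by
    refine ((summable_geometric_of_lt_one hw0.le hw1).mul_left (C * w ^ N₂)).congr fun k => ?_
    rw [pow_add]; ring
  have htsum : (∑' k : ℕ, ℙ (A (k + N₂))) ≠ ⊤ := by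
    refine ne_top_of_le_ne_top ?_ (ENNReal.tsum_le_tsum fun k => hAk (k + N₂) (hK k))
    rw [← ENNReal.ofReal_tsum_of_nonneg (fun k => mul_nonneg hC0.le (pow_nonneg hw0.le _))
      hsummable]
    exact ENNReal.ofReal_ne_top
  have hBC := MeasureTheory.ae_eventually_notMem htsum
  filter_upwards [hBC] with ω hω
  obtain ⟨K, hK2⟩ := eventually_atTop.1 hω
  rw [eventually_atTop]
  refine ⟨2 ^ (K + N₂ + 1), fun N hN => ?_⟩
  have hNpos : 0 < N := lt_of_lt_of_le (pow_pos (by norm_num) _) hN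
  set k := Nat.log 2 N with hkdef
  have hk1 : 2 ^ k ≤ N := Nat.pow_log_le_self 2 hNpos.ne'
  have hk2 : N < 2 ^ (k+1) := Nat.lt_pow_succ_log_self one_lt_two N
  have hkK : K + N₂ ≤ k := by
    have := Nat.log_mono_right (b := 2) hN
    rw [Nat.log_pow one_lt_two] at this
    omega
  have hnotin : ω ∉ A k := by
    have h := hK2 (k - N₂) (by omega)
    rwa [Nat.sub_add_cancel (by omega)] at h
  rw [hAdef] at hnotin
  simp only [Set.mem_setOf_eq, not_le] at hnotin
  -- monotonicity of F
  have hFmono : F N ω ≤ F (2 ^ (k+1)) ω := by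
    have hsub : Finset.Icc 1 (r N) ⊆ Finset.Icc 1 (r (2 ^ (k+1))) :=
      Finset.Icc_subset_Icc_right (hrmono hk2.le)
    rw [hFdef]
    simp only
    calc ∑ j ∈ Finset.Icc 1 (r N), ∑ i ∈ Finset.Icc 1 (r N), (G j i ω : ENNReal)
        ≤ ∑ j ∈ Finset.Icc 1 (r N), ∑ i ∈ Finset.Icc 1 (r (2 ^ (k+1))), (G j i ω : ENNReal) :=
          Finset.sum_le_sum fun j _ => Finset.sum_le_sum_of_subset hsub
      _ ≤ ∑ j ∈ Finset.Icc 1 (r (2 ^ (k+1))), ∑ i ∈ Finset.Icc 1 (r (2 ^ (k+1))),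
            (G j i ω : ENNReal) := Finset.sum_le_sum_of_subset hsub
  have hFof : ENNReal.ofReal (∑ j ∈ Finset.Icc 1 (r N),
      ∑ i ∈ Finset.Icc 1 (r N), (G j i ω : ℝ)) = F N ω := by
    rw [hFdef]
    simp only
    rw [ENNReal.ofReal_sum_of_nonneg (fun j _ =>
      Finset.sum_nonneg fun i _ => Nat.cast_nonneg _)]
    refine Finset.sum_congr rfl fun j _ => ?_
    rw [ENNReal.ofReal_sum_of_nonneg (fun i _ => Nat.cast_nonneg _)]
    exact Finset.sum_congr rfl fun i _ => ENNReal.ofReal_natCast _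
  have hchain : ENNReal.ofReal (∑ j ∈ Finset.Icc 1 (r N),
      ∑ i ∈ Finset.Icc 1 (r N), (G j i ω : ℝ))
      ≤ ENNReal.ofReal (((2:ℝ) ^ k) ^ (1 - τ/2 + δ)) := by
    rw [hFof]
    exact le_trans hFmono hnotin.le
  have hB : (0:ℝ) ≤ ((2:ℝ) ^ k) ^ (1 - τ/2 + δ) :=
    (Real.rpow_pos_of_pos (by positivity) _).le
  have hreal : (∑ j ∈ Finset.Icc 1 (r N), ∑ i ∈ Finset.Icc 1 (r N), (G j i ω : ℝ))
      ≤ ((2:ℝ) ^ k) ^ (1 - τ/2 + δ) := by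
    exact (ENNReal.ofReal_le_ofReal_iff hB).1 hchain
  refine le_trans hreal ?_
  apply Real.rpow_le_rpow (by positivity) ?_ he.le
  have : ((2:ℕ) ^ k : ℕ) ≤ N := hk1
  exact_mod_cast this


end
end

section
/- Let γ1, γ2 ≥ 1. Suppose a probability space carries a simple symmetric random walk S with local time ξ and a standard Wiener process W admitting a local time process η (i.e. for every t ≥ 0 and every bounded Borel f, ∫_0^t f(W(s)) ds = ∫_ℝ f(x) η(x,t) dx) such that, for every ε > 0, |S(n) − W(n)| = O(n^{1/4+ε}) and sup_{x∈ℤ} |ξ(x,n) − η(x,n)| = O(n^{1/4+ε}) almost surely as n → ∞. Define Â(n) = γ1 Σ_{j=0}^{∞} ξ(j,n) + γ2 Σ_{j=1}^{∞} ξ(−j,n) and A(n) = γ1 ∫_0^n 1{W(s) ≥ 0} ds + γ2 ∫_0^n 1{W(s) < 0} ds. Then for every ε > 0, almost surely as n → ∞, |Â(n) − A(n)| = O(n^{3/4+ε}). -/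
open MeasureTheory ProbabilityTheory Filter Asymptotics Real NNReal
open scoped ENNReal

noncomputable section

section AuxLemmas

set_option linter.unusedSectionVars false

lemma one_le_rpow' {x e : ℝ} (hx : 1 ≤ x) (he : 0 ≤ e) : 1 ≤ x ^ e := by
  have h := Real.rpow_le_rpow_of_exponent_le hx he
  rwa [Real.rpow_zero] at h


lemma sqrt_two_pi_ge_two : (2:ℝ) ≤ Real.sqrt (2 * π) := by
  have h4 : (2:ℝ) = Real.sqrt 4 := by
    rw [show (4:ℝ) = 2^2 by norm_num, Real.sqrt_sq (by norm_num : (0:ℝ) ≤ 2)]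
  rw [h4]
  exact Real.sqrt_le_sqrt (by nlinarith [Real.pi_gt_three])

lemma gauss_ball {v : ℝ≥0} (hv : v ≠ 0) {m : ℝ} (hm : 0 ≤ m) :
    gaussianReal 0 v {x | |x| ≤ m} ≤ ENNReal.ofReal (m / Real.sqrt v) := by
  rw [gaussianReal_apply _ hv]
  have hv0 : (0:ℝ) < v := by positivity
  set c : ℝ := (Real.sqrt (2 * π * v))⁻¹ with hc
  have h1 : ∀ x : ℝ, gaussianPDF 0 v x ≤ ENNReal.ofReal c := by
    intro x
    apply ENNReal.ofReal_le_ofReal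
    rw [gaussianPDFReal]
    calc (√(2 * π * v))⁻¹ * rexp (- (x - 0)^2 / (2 * v)) ≤ (√(2 * π * v))⁻¹ * 1 := by
          apply mul_le_mul_of_nonneg_left _ (by positivity)
          rw [Real.exp_le_one_iff]
          exact div_nonpos_of_nonpos_of_nonneg (neg_nonpos.2 (sq_nonneg _)) (by positivity)
      _ = c := mul_one _
  have hIcc : {x : ℝ | |x| ≤ m} = Set.Icc (-m) m := by ext x; simp [abs_le]
  calc ∫⁻ x in {x | |x| ≤ m}, gaussianPDF 0 v x
      ≤ ∫⁻ _ in {x : ℝ | |x| ≤ m}, ENNReal.ofReal c := lintegral_mono fun x => h1 x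
    _ = ENNReal.ofReal c * volume {x : ℝ | |x| ≤ m} := setLIntegral_const _ _
    _ = ENNReal.ofReal c * ENNReal.ofReal (m - -m) := by rw [hIcc, Real.volume_Icc]
    _ = ENNReal.ofReal (c * (m - -m)) := (ENNReal.ofReal_mul (by positivity)).symm
    _ ≤ ENNReal.ofReal (m / Real.sqrt v) := by
        apply ENNReal.ofReal_le_ofReal
        have h2 : Real.sqrt (2 * π * v) = Real.sqrt (2 * π) * Real.sqrt v := by
          rw [← Real.sqrt_mul (by positivity)]
        have hsv : (0:ℝ) < Real.sqrt v := Real.sqrt_pos.2 hv0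
        have h5 : c * (m - -m) = (2 * m) / Real.sqrt (2 * π * v) := by
          rw [hc]; field_simp; ring
        rw [h5]
        have h6 : (2 * m) / Real.sqrt (2 * π * v) ≤ (2 * m) / (2 * Real.sqrt v) := by
          apply div_le_div_of_nonneg_left (by linarith) (by positivity)
          rw [h2]
          exact mul_le_mul_of_nonneg_right sqrt_two_pi_ge_two (le_of_lt hsv)
        calc (2 * m) / Real.sqrt (2 * π * v) ≤ (2 * m) / (2 * Real.sqrt v) := h6
          _ = m / Real.sqrt v := by rw [mul_div_mul_left _ _ (by norm_num : (2:ℝ) ≠ 0)]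


lemma gauss_tail {v : ℝ≥0} (hv : v ≠ 0) (hv1 : (v:ℝ) ≤ 1) {r : ℝ} (hr : 0 ≤ r) :
    gaussianReal 0 v {x | r ≤ |x|} ≤ ENNReal.ofReal (Real.sqrt 2 * Real.exp (-(r^2)/4)) := by
  rw [gaussianReal_apply _ hv]
  have hv0 : (0:ℝ) < v := by positivity
  set c : ℝ := (Real.sqrt (2 * π * v))⁻¹ with hc
  have hc0 : 0 < c := by rw [hc]; positivity
  set b : ℝ := 1 / (4 * v) with hb
  have hb0 : 0 < b := by rw [hb]; positivity
  set E : ℝ := Real.exp (-(r^2)/4) with hE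
  have hE0 : 0 < E := Real.exp_pos _
  -- pointwise bound on the tail set
  have h1 : ∀ x ∈ {x : ℝ | r ≤ |x|}, gaussianPDF 0 v x ≤ ENNReal.ofReal (E * (c * Real.exp (-b * x^2))) := by
    intro x hx
    apply ENNReal.ofReal_le_ofReal
    rw [gaussianPDFReal]
    have hx2 : r^2 ≤ x^2 := by
      have := sq_abs x ▸ pow_le_pow_left₀ hr hx 2
      simpa [sq_abs] using this
    have key : rexp (- (x - 0)^2 / (2 * v)) ≤ E * Real.exp (-b * x^2) := by
      rw [hE, ← Real.exp_add]
      apply Real.exp_le_exp.2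
      have hsplit : - (x - 0)^2 / (2*(v:ℝ)) = -x^2/(4*v) + -x^2/(4*v) := by
        field_simp; ring
      rw [hsplit]
      have h1' : r^2/4 ≤ r^2/(4*v) := by
        apply div_le_div_of_nonneg_left (sq_nonneg _) (by positivity)
        nlinarith
      have h2' : r^2/(4*(v:ℝ)) ≤ x^2/(4*v) := by
        apply div_le_div_of_nonneg_right hx2 (by positivity)
      have e1 : -x^2/(4*(v:ℝ)) = -(x^2/(4*v)) := neg_div _ _
      have e2 : -(r^2)/4 = -(r^2/4) := neg_div _ _
      have e3 : -b * x^2 = -(x^2/(4*(v:ℝ))) := by rw [hb]; field_simp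
      rw [e1, e2, e3]
      linarith
    calc c * rexp (- (x - 0)^2 / (2 * v)) ≤ c * (E * Real.exp (-b * x^2)) :=
          mul_le_mul_of_nonneg_left key (le_of_lt hc0)
      _ = E * (c * Real.exp (-b * x^2)) := by ring
  have hInt : Integrable (fun x : ℝ => E * (c * Real.exp (-b * x^2))) := by
    exact ((integrable_exp_neg_mul_sq hb0).const_mul c).const_mul E
  calc ∫⁻ x in {x | r ≤ |x|}, gaussianPDF 0 v x
      ≤ ∫⁻ x in {x : ℝ | r ≤ |x|}, ENNReal.ofReal (E * (c * Real.exp (-b * x^2))) := by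
        apply setLIntegral_mono' _ h1
        · exact measurableSet_le measurable_const measurable_norm
    _ ≤ ∫⁻ x : ℝ, ENNReal.ofReal (E * (c * Real.exp (-b * x^2))) := setLIntegral_le_lintegral _ _
    _ = ENNReal.ofReal (∫ x : ℝ, E * (c * Real.exp (-b * x^2))) := by
        rw [ofReal_integral_eq_lintegral_ofReal hInt]
        exact Filter.Eventually.of_forall fun x => by positivity
    _ ≤ ENNReal.ofReal (Real.sqrt 2 * E) := by
        apply ENNReal.ofReal_le_ofReal
        apply le_of_eq
        rw [integral_const_mul, integral_const_mul, integral_gaussian]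
        have : Real.sqrt (π / b) = Real.sqrt (4 * π * v) := by
          congr 1; rw [hb]; field_simp
        rw [this]
        have h2 : Real.sqrt (2 * π * v) = Real.sqrt (2 * π) * Real.sqrt v := by
          rw [← Real.sqrt_mul (by positivity)]
        have h4 : Real.sqrt (4 * π * v) = Real.sqrt 2 * Real.sqrt (2 * π * v) := by
          rw [← Real.sqrt_mul (by norm_num), show (2:ℝ) * (2 * π * v) = 4 * π * v by ring]
        rw [h4, hc]
        have hs : (0:ℝ) < Real.sqrt (2 * π * v) := Real.sqrt_pos.2 (by positivity)
        calc E * ((Real.sqrt (2*π*(v:ℝ)))⁻¹ * (Real.sqrt 2 * Real.sqrt (2*π*v)))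
            = Real.sqrt 2 * E * (Real.sqrt (2*π*(v:ℝ)) * (Real.sqrt (2*π*v))⁻¹) := by ring
          _ = Real.sqrt 2 * E := by rw [mul_inv_cancel₀ (ne_of_gt hs), mul_one]
    _ = ENNReal.ofReal (Real.sqrt 2 * Real.exp (-(r^2)/4)) := by rw [hE]


variable {Ω : Type*} [MeasureSpace Ω] [IsProbabilityMeasure (ℙ : Measure Ω)]

lemma lint_slice {B : Set (Ω × ℝ)} (hB : MeasurableSet B) :
    ∫⁻ ω, volume (Prod.mk ω ⁻¹' B) ∂ℙ = ∫⁻ s, ℙ {ω | (ω, s) ∈ B} ∂volume := by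
  rw [← Measure.prod_apply hB, Measure.prod_apply_symm hB]
  rfl

lemma slice_markov {f : Ω → ℝ≥0∞} (hf : AEMeasurable f ℙ) {a : ℝ≥0∞} (ha : a ≠ 0) (ha' : a ≠ ⊤) :
    ℙ {ω | a ≤ f ω} ≤ (∫⁻ ω, f ω ∂ℙ) / a := by
  rw [ENNReal.le_div_iff_mul_le (Or.inl ha) (Or.inl ha'), mul_comm]
  exact mul_meas_ge_le_lintegral₀ hf a

lemma law_W_abs_le {W : ℝ → Ω → ℝ}
    (hW0 : ∀ ω, W 0 ω = 0) (hWm : ∀ t, Measurable (W t))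
    (hWi : ∀ s t : ℝ, 0 ≤ s → s ≤ t →
      Measure.map (fun ω => W t ω - W s ω) ℙ = gaussianReal 0 (Real.toNNReal (t - s)))
    {s : ℝ} (hs : 0 < s) {m : ℝ} (hm : 0 ≤ m) :
    ℙ {ω | |W s ω| ≤ m} ≤ ENNReal.ofReal (m * s ^ (-(1:ℝ)/2)) := by
  have hmap := hWi 0 s le_rfl hs.le
  have hfun : (fun ω => W s ω - W 0 ω) = W s := by
    funext ω; rw [hW0 ω, sub_zero]
  rw [hfun] at hmap
  have hset : MeasurableSet {x : ℝ | |x| ≤ m} :=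
    measurableSet_le (measurable_id.abs) measurable_const
  have : {ω | |W s ω| ≤ m} = W s ⁻¹' {x : ℝ | |x| ≤ m} := rfl
  rw [this, ← Measure.map_apply (hWm s) hset, hmap]
  have hb := gauss_ball (v := (s - 0).toNNReal) (by simp [Real.toNNReal_eq_zero]; linarith) hm
  refine le_trans hb (le_of_eq ?_)
  congr 1
  rw [Real.coe_toNNReal _ (by linarith), sub_zero, Real.sqrt_eq_rpow,
    div_eq_mul_inv, ← Real.rpow_neg hs.le]
  norm_num

lemma law_W_osc {W : ℝ → Ω → ℝ}
    (hWm : ∀ t, Measurable (W t))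
    (hWi : ∀ s t : ℝ, 0 ≤ s → s ≤ t →
      Measure.map (fun ω => W t ω - W s ω) ℙ = gaussianReal 0 (Real.toNNReal (t - s)))
    {s t : ℝ} (hs : 0 ≤ s) (hst : s ≤ t) (ht1 : t ≤ s + 1) {r : ℝ} (hr : 0 < r) :
    ℙ {ω | r ≤ |W s ω - W t ω|} ≤ ENNReal.ofReal (Real.sqrt 2 * Real.exp (-(r^2)/4)) := by
  rcases eq_or_lt_of_le hst with h | h
  · have : {ω | r ≤ |W s ω - W t ω|} = ∅ := by
      ext ω; simp only [Set.mem_setOf_eq, Set.mem_empty_iff_false, iff_false, not_le, h]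
      rw [← h]; simpa using hr
    rw [this]; simp
  · have hmap := hWi s t hs hst
    have hset : MeasurableSet {x : ℝ | r ≤ |x|} :=
      measurableSet_le measurable_const (measurable_id.abs)
    have heq : {ω | r ≤ |W s ω - W t ω|} = (fun ω => W t ω - W s ω) ⁻¹' {x : ℝ | r ≤ |x|} := by
      ext ω; simp only [Set.mem_setOf_eq, Set.preimage_setOf_eq, abs_sub_comm]
    rw [heq, ← Measure.map_apply (f := fun ω => W t ω - W s ω) ((hWm t).sub (hWm s)) hset, hmap]
    exact gauss_tail (by simp [Real.toNNReal_eq_zero]; linarith)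
      (by rw [Real.coe_toNNReal _ (by linarith)]; linarith) hr.le

variable {Ω : Type*} [MeasureSpace Ω] [IsProbabilityMeasure (ℙ : Measure Ω)]

def Yset (W : ℝ → Ω → ℝ) (δ : ℝ) (n : ℕ) : Set (Ω × ℝ) :=
  {p | p.2 ∈ Set.Ioc (0:ℝ) (n:ℝ) ∧ |W p.2 p.1| ≤ (n:ℝ) ^ ((1:ℝ)/4 + 2*δ)}

def Zset (W : ℝ → Ω → ℝ) (δ : ℝ) (n : ℕ) : Set (Ω × ℝ) :=
  {p | p.2 ∈ Set.Ioc (0:ℝ) (n:ℝ) ∧ (n:ℝ)^δ ≤ |W p.2 p.1 - W (⌈p.2⌉₊ : ℝ) p.1|}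

lemma Wunc {W : ℝ → Ω → ℝ} (hWc : ∀ ω, Continuous fun t => W t ω)
    (hWm : ∀ t, Measurable (W t)) : Measurable fun p : Ω × ℝ => W p.2 p.1 :=
  (measurable_uncurry_of_continuous_of_measurable hWc hWm).comp measurable_swap

lemma Wunc_ceil {W : ℝ → Ω → ℝ} (hWc : ∀ ω, Continuous fun t => W t ω)
    (hWm : ∀ t, Measurable (W t)) : Measurable fun p : Ω × ℝ => W (⌈p.2⌉₊ : ℝ) p.1 := by
  have h2 : Measurable fun p : Ω × ℝ => ((⌈p.2⌉₊ : ℕ) : ℝ) :=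
    (measurable_from_top (f := fun k : ℕ => (k:ℝ))).comp
      (Nat.measurable_ceil.comp measurable_snd)
  exact (Wunc hWc hWm).comp (measurable_fst.prodMk h2)

lemma Yset_mble {W : ℝ → Ω → ℝ} (hWc : ∀ ω, Continuous fun t => W t ω)
    (hWm : ∀ t, Measurable (W t)) (δ : ℝ) (n : ℕ) : MeasurableSet (Yset W δ n) := by
  apply MeasurableSet.inter
  · exact measurable_snd measurableSet_Ioc
  · exact measurableSet_le ((Wunc hWc hWm).abs) measurable_const

lemma Zset_mble {W : ℝ → Ω → ℝ} (hWc : ∀ ω, Continuous fun t => W t ω)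
    (hWm : ∀ t, Measurable (W t)) (δ : ℝ) (n : ℕ) : MeasurableSet (Zset W δ n) := by
  apply MeasurableSet.inter
  · exact measurable_snd measurableSet_Ioc
  · exact measurableSet_le measurable_const (((Wunc hWc hWm).sub (Wunc_ceil hWc hWm)).abs)

variable {W : ℝ → Ω → ℝ}

lemma Y_exp (hWc : ∀ ω, Continuous fun t => W t ω) (hW0 : ∀ ω, W 0 ω = 0)
    (hWm : ∀ t, Measurable (W t))
    (hWi : ∀ s t : ℝ, 0 ≤ s → s ≤ t →
      Measure.map (fun ω => W t ω - W s ω) ℙ = gaussianReal 0 (Real.toNNReal (t - s)))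
    {δ : ℝ} (hδ : 0 < δ) {n : ℕ} (hn : 1 ≤ n) :
    ∫⁻ ω, volume (Prod.mk ω ⁻¹' Yset W δ n) ∂ℙ
      ≤ ENNReal.ofReal (2 * (n:ℝ) ^ ((3:ℝ)/4 + 2*δ)) := by
  have hn0 : (0:ℝ) < n := by exact_mod_cast hn
  set m : ℝ := (n:ℝ) ^ ((1:ℝ)/4 + 2*δ) with hmdef
  have hm : 0 ≤ m := by positivity
  rw [lint_slice (Yset_mble hWc hWm δ n)]
  have key : ∀ s : ℝ, ℙ {ω | (ω, s) ∈ Yset W δ n}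
      ≤ (Set.Ioc (0:ℝ) (n:ℝ)).indicator (fun s => ENNReal.ofReal (m * s ^ (-(1:ℝ)/2))) s := by
    intro s
    by_cases hs : s ∈ Set.Ioc (0:ℝ) (n:ℝ)
    · rw [Set.indicator_of_mem hs]
      refine le_trans (measure_mono fun ω hω => hω.2) (law_W_abs_le hW0 hWm hWi hs.1 hm)
    · rw [Set.indicator_of_notMem hs]
      have : {ω | (ω, s) ∈ Yset W δ n} = ∅ := by
        ext ω; exact ⟨fun hω => hs hω.1, fun h => absurd h (Set.notMem_empty ω)⟩
      simp [this]
  have hInt : IntegrableOn (fun s : ℝ => m * s ^ (-(1:ℝ)/2)) (Set.Ioc 0 (n:ℝ)) volume := by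
    have h0 : IntervalIntegrable (fun s : ℝ => s ^ (-(1:ℝ)/2)) volume 0 (n:ℝ) := by
      apply intervalIntegral.intervalIntegrable_rpow' (by norm_num)
    have h1 := h0.const_mul m
    rwa [intervalIntegrable_iff_integrableOn_Ioc_of_le hn0.le] at h1
  calc ∫⁻ s, ℙ {ω | (ω, s) ∈ Yset W δ n} ∂volume
      ≤ ∫⁻ s, (Set.Ioc (0:ℝ) (n:ℝ)).indicator (fun s => ENNReal.ofReal (m * s ^ (-(1:ℝ)/2))) s :=
        lintegral_mono key
    _ = ∫⁻ s in Set.Ioc (0:ℝ) (n:ℝ), ENNReal.ofReal (m * s ^ (-(1:ℝ)/2)) :=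
        lintegral_indicator measurableSet_Ioc _
    _ = ENNReal.ofReal (∫ s in Set.Ioc (0:ℝ) (n:ℝ), m * s ^ (-(1:ℝ)/2)) := by
        rw [ofReal_integral_eq_lintegral_ofReal hInt]
        refine (ae_restrict_iff' measurableSet_Ioc).2 (Filter.Eventually.of_forall fun s hs => ?_)
        have : (0:ℝ) ≤ s ^ (-(1:ℝ)/2) := Real.rpow_nonneg hs.1.le _
        positivity
    _ ≤ ENNReal.ofReal (2 * (n:ℝ) ^ ((3:ℝ)/4 + 2*δ)) := by
        apply ENNReal.ofReal_le_ofReal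
        rw [integral_const_mul]
        have hval : ∫ s in Set.Ioc (0:ℝ) (n:ℝ), s ^ (-(1:ℝ)/2) = 2 * (n:ℝ) ^ ((1:ℝ)/2) := by
          rw [← intervalIntegral.integral_of_le hn0.le,
            integral_rpow (Or.inl (by norm_num : (-1:ℝ) < -(1)/2))]
          rw [Real.zero_rpow (by norm_num : (-(1:ℝ)/2 + 1) ≠ 0)]
          norm_num
          try ring
        rw [hval]
        have : m * (2 * (n:ℝ) ^ ((1:ℝ)/2)) = 2 * (m * (n:ℝ) ^ ((1:ℝ)/2)) := by ring
        rw [this, hmdef, ← Real.rpow_add hn0]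
        apply mul_le_mul_of_nonneg_left _ (by norm_num)
        apply Real.rpow_le_rpow_of_exponent_le (by exact_mod_cast hn)
        linarith

lemma Z_exp (hWc : ∀ ω, Continuous fun t => W t ω)
    (hWm : ∀ t, Measurable (W t))
    (hWi : ∀ s t : ℝ, 0 ≤ s → s ≤ t →
      Measure.map (fun ω => W t ω - W s ω) ℙ = gaussianReal 0 (Real.toNNReal (t - s)))
    {δ : ℝ} (hδ : 0 < δ) {n : ℕ} (hn : 1 ≤ n) :
    ∫⁻ ω, volume (Prod.mk ω ⁻¹' Zset W δ n) ∂ℙ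
      ≤ ENNReal.ofReal ((n:ℝ) * (Real.sqrt 2 * Real.exp (-((n:ℝ)^δ)^2/4))) := by
  have hn0 : (0:ℝ) < n := by exact_mod_cast hn
  set r : ℝ := (n:ℝ) ^ δ with hrdef
  have hr : 0 < r := Real.rpow_pos_of_pos hn0 _
  set c : ℝ := Real.sqrt 2 * Real.exp (-(r^2)/4) with hcdef
  have hc : 0 ≤ c := by positivity
  rw [lint_slice (Zset_mble hWc hWm δ n)]
  have key : ∀ s : ℝ, ℙ {ω | (ω, s) ∈ Zset W δ n}
      ≤ (Set.Ioc (0:ℝ) (n:ℝ)).indicator (fun _ => ENNReal.ofReal c) s := by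
    intro s
    by_cases hs : s ∈ Set.Ioc (0:ℝ) (n:ℝ)
    · rw [Set.indicator_of_mem hs]
      refine le_trans (measure_mono fun ω hω => hω.2) ?_
      exact law_W_osc hWm hWi hs.1.le (Nat.le_ceil s)
        (le_of_lt (Nat.ceil_lt_add_one hs.1.le)) hr
    · rw [Set.indicator_of_notMem hs]
      have : {ω | (ω, s) ∈ Zset W δ n} = ∅ := by
        ext ω; exact ⟨fun hω => hs hω.1, fun h => absurd h (Set.notMem_empty ω)⟩
      simp [this]
  calc ∫⁻ s, ℙ {ω | (ω, s) ∈ Zset W δ n} ∂volume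
      ≤ ∫⁻ s, (Set.Ioc (0:ℝ) (n:ℝ)).indicator (fun _ => ENNReal.ofReal c) s :=
        lintegral_mono key
    _ = ENNReal.ofReal c * volume (Set.Ioc (0:ℝ) (n:ℝ)) := by
        rw [lintegral_indicator measurableSet_Ioc, setLIntegral_const]
    _ = ENNReal.ofReal ((n:ℝ) * c) := by
        rw [Real.volume_Ioc, sub_zero, ← ENNReal.ofReal_mul hc, mul_comm]
    _ = ENNReal.ofReal ((n:ℝ) * (Real.sqrt 2 * Real.exp (-((n:ℝ)^δ)^2/4))) := rfl

lemma ae_eventually_not {A : ℕ → Set Ω} (hsum : ∑' i, ℙ (A i) ≠ ⊤) :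
    ∀ᵐ ω ∂(ℙ : Measure Ω), ∀ᶠ i in atTop, ω ∉ A i := by
  filter_upwards [MeasureTheory.ae_finite_setOf_mem hsum] with ω hω
  have h1 : {i : ℕ | ω ∈ A i}ᶜ ∈ Filter.cofinite := hω.compl_mem_cofinite
  rw [Nat.cofinite_eq_atTop] at h1
  filter_upwards [h1] with i hi using hi

lemma Ybound (hWc : ∀ ω, Continuous fun t => W t ω) (hW0 : ∀ ω, W 0 ω = 0)
    (hWm : ∀ t, Measurable (W t))
    (hWi : ∀ s t : ℝ, 0 ≤ s → s ≤ t →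
      Measure.map (fun ω => W t ω - W s ω) ℙ = gaussianReal 0 (Real.toNNReal (t - s)))
    {δ : ℝ} (hδ : 0 < δ) :
    ∀ᵐ ω ∂(ℙ : Measure Ω), ∀ᶠ n : ℕ in atTop,
      volume (Prod.mk ω ⁻¹' Yset W δ n)
        ≤ ENNReal.ofReal ((2:ℝ) ^ ((3:ℝ)/4 + 3*δ) * (n:ℝ) ^ ((3:ℝ)/4 + 3*δ)) := by
  set e2 : ℝ := (3:ℝ)/4 + 2*δ with he2
  set e3 : ℝ := (3:ℝ)/4 + 3*δ with he3
  set A : ℕ → Set Ω := fun i =>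
    {ω | ENNReal.ofReal ((((2:ℕ)^(i+1) : ℕ):ℝ) ^ e3) ≤ volume (Prod.mk ω ⁻¹' Yset W δ (2^(i+1)))}
    with hA
  have hNpos : ∀ i : ℕ, (0:ℝ) < (((2:ℕ)^(i+1) : ℕ):ℝ) := by
    intro i; positivity
  have hr1 : (2:ℝ) ^ (-δ) < 1 :=
    Real.rpow_lt_one_of_one_lt_of_neg one_lt_two (by linarith)
  have hr0 : (0:ℝ) ≤ (2:ℝ) ^ (-δ) := Real.rpow_nonneg (by norm_num) _
  have hPA : ∀ i : ℕ, ℙ (A i) ≤ ENNReal.ofReal 2 * ENNReal.ofReal ((2:ℝ)^(-δ)) ^ (i+1) := by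
    intro i
    set N : ℕ := 2^(i+1) with hN
    have hNr : (0:ℝ) < (N:ℝ) := hNpos i
    have h1 : ℙ (A i) ≤ (∫⁻ ω, volume (Prod.mk ω ⁻¹' Yset W δ N) ∂ℙ) /
        ENNReal.ofReal ((N:ℝ) ^ e3) := by
      apply slice_markov
      · exact (measurable_measure_prodMk_left (Yset_mble hWc hWm δ N)).aemeasurable
      · simp only [ne_eq, ENNReal.ofReal_eq_zero, not_le]
        positivity
      · exact ENNReal.ofReal_ne_top
    calc ℙ (A i) ≤ (∫⁻ ω, volume (Prod.mk ω ⁻¹' Yset W δ N) ∂ℙ) /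
          ENNReal.ofReal ((N:ℝ) ^ e3) := h1
      _ ≤ ENNReal.ofReal (2 * (N:ℝ) ^ e2) / ENNReal.ofReal ((N:ℝ) ^ e3) :=
          ENNReal.div_le_div_right (Y_exp hWc hW0 hWm hWi hδ Nat.one_le_two_pow) _
      _ = ENNReal.ofReal 2 * ENNReal.ofReal ((2:ℝ)^(-δ)) ^ (i+1) := ?_
    rw [← ENNReal.ofReal_div_of_pos (by positivity)]
    have hval : 2 * (N:ℝ) ^ e2 / (N:ℝ) ^ e3 = 2 * ((2:ℝ)^(-δ))^(i+1) := by
      rw [mul_div_assoc, ← Real.rpow_sub hNr]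
      have he : e2 - e3 = -δ := by rw [he2, he3]; ring
      rw [he]
      congr 1
      have hcast : ((N:ℕ):ℝ) = (2:ℝ) ^ (i+1 : ℕ) := by rw [hN]; push_cast; ring
      rw [hcast, ← Real.rpow_natCast ((2:ℝ)^(-δ)) (i+1), ← Real.rpow_natCast (2:ℝ) (i+1),
        ← Real.rpow_mul (by norm_num), ← Real.rpow_mul (by norm_num)]
      congr 1
      ring
    rw [hval, ENNReal.ofReal_mul (by norm_num), ENNReal.ofReal_pow hr0]
  have hsum : ∑' i, ℙ (A i) ≠ ⊤ := by
    refine ne_top_of_le_ne_top ?_ (ENNReal.tsum_le_tsum hPA)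
    set r : ℝ≥0∞ := ENNReal.ofReal ((2:ℝ)^(-δ)) with hr
    have hrlt : r < 1 := by rw [hr, ← ENNReal.ofReal_one]; exact ENNReal.ofReal_lt_ofReal_iff_of_nonneg hr0 |>.2 hr1
    have : ∀ i : ℕ, ENNReal.ofReal 2 * r ^ (i+1) = (ENNReal.ofReal 2 * r) * r ^ i := by
      intro i; rw [pow_succ']; ring
    rw [tsum_congr this, ENNReal.tsum_mul_left, ENNReal.tsum_geometric]
    apply ENNReal.mul_ne_top
    · exact ENNReal.mul_ne_top ENNReal.ofReal_ne_top (ne_top_of_lt (lt_of_lt_of_le hrlt le_top))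
    · rw [ne_eq, ENNReal.inv_eq_top, tsub_eq_zero_iff_le]
      exact not_le.2 hrlt
  filter_upwards [ae_eventually_not hsum] with ω hω
  obtain ⟨I, hI⟩ := eventually_atTop.1 hω
  rw [eventually_atTop]
  refine ⟨2^I, fun n hn => ?_⟩
  have hn1 : 1 ≤ n := le_trans Nat.one_le_two_pow hn
  set i : ℕ := Nat.log 2 n with hi
  have hiI : I ≤ i := (Nat.le_log_iff_pow_le one_lt_two (by omega)).2 hn
  have h1 : n < 2^(i+1) := Nat.lt_pow_succ_log_self one_lt_two n
  have h2 : 2^i ≤ n := Nat.pow_log_le_self 2 (by omega)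
  have hNle : ((2^(i+1) : ℕ):ℝ) ≤ 2 * (n:ℝ) := by
    push_cast
    have : (2:ℝ)^i ≤ (n:ℝ) := by exact_mod_cast h2
    calc (2:ℝ)^(i+1) = 2 * (2:ℝ)^i := by ring
      _ ≤ 2 * (n:ℝ) := by linarith
  have hsub : Prod.mk ω ⁻¹' Yset W δ n ⊆ Prod.mk ω ⁻¹' Yset W δ (2^(i+1)) := by
    intro s hs
    refine ⟨Set.mem_of_mem_of_subset hs.1 (Set.Ioc_subset_Ioc le_rfl ?_), le_trans hs.2 ?_⟩
    · exact_mod_cast h1.le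
    · apply Real.rpow_le_rpow (Nat.cast_nonneg n) (by exact_mod_cast h1.le)
      linarith
  calc volume (Prod.mk ω ⁻¹' Yset W δ n)
      ≤ volume (Prod.mk ω ⁻¹' Yset W δ (2^(i+1))) := measure_mono hsub
    _ ≤ ENNReal.ofReal ((((2:ℕ)^(i+1) : ℕ):ℝ) ^ e3) := le_of_lt (not_le.1 (hI i hiI))
    _ ≤ ENNReal.ofReal ((2:ℝ) ^ e3 * (n:ℝ) ^ e3) := by
        apply ENNReal.ofReal_le_ofReal
        calc (((2:ℕ)^(i+1) : ℕ):ℝ) ^ e3 ≤ (2 * (n:ℝ)) ^ e3 := by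
              apply Real.rpow_le_rpow (by positivity) hNle (by rw [he3]; linarith)
          _ = (2:ℝ) ^ e3 * (n:ℝ) ^ e3 :=
              Real.mul_rpow (by norm_num) (Nat.cast_nonneg n)

lemma exp_poly {x : ℝ} (hx : 0 < x) {K : ℕ} (hK : 1 ≤ K) :
    Real.exp (-x/4) ≤ (4*K/x)^K := by
  have hK0 : (0:ℝ) < K := by exact_mod_cast hK
  have h1 : x/(4*K) ≤ Real.exp (x/(4*K)) := by
    have := Real.add_one_le_exp (x/(4*K))
    linarith
  have h2 : (x/(4*K))^K ≤ (Real.exp (x/(4*K)))^K :=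
    pow_le_pow_left₀ (by positivity) h1 K
  have h3 : (Real.exp (x/(4*K)))^K = Real.exp (x/4) := by
    rw [← Real.exp_nat_mul]
    congr 1
    field_simp
  rw [h3] at h2
  have h4 : Real.exp (-x/4) = (Real.exp (x/4))⁻¹ := by
    rw [← Real.exp_neg]; congr 1; ring
  rw [h4]
  have h5 : (Real.exp (x/4))⁻¹ ≤ ((x/(4*K))^K)⁻¹ := by
    apply inv_anti₀ (by positivity) h2
  refine le_trans h5 (le_of_eq ?_)
  rw [← inv_pow, inv_div]

lemma Zbound (hWc : ∀ ω, Continuous fun t => W t ω)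
    (hWm : ∀ t, Measurable (W t))
    (hWi : ∀ s t : ℝ, 0 ≤ s → s ≤ t →
      Measure.map (fun ω => W t ω - W s ω) ℙ = gaussianReal 0 (Real.toNNReal (t - s)))
    {δ : ℝ} (hδ : 0 < δ) :
    ∀ᵐ ω ∂(ℙ : Measure Ω), ∀ᶠ n : ℕ in atTop,
      volume (Prod.mk ω ⁻¹' Zset W δ n) ≤ 1 := by
  set K : ℕ := ⌈3/(2*δ)⌉₊ + 1 with hKdef
  have hK1 : 1 ≤ K := by omega
  have hKd : 3 ≤ 2*δ*K := by
    have h1 : 3/(2*δ) ≤ (K:ℝ) := by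
      have := Nat.le_ceil (3/(2*δ))
      have h2 : ((⌈3/(2*δ)⌉₊ : ℕ):ℝ) ≤ (K:ℝ) := by exact_mod_cast Nat.le_succ _
      linarith
    rw [div_le_iff₀ (by linarith)] at h1
    linarith
  set c : ℝ := Real.sqrt 2 * (4*K)^K with hcdef
  have hc : 0 ≤ c := by positivity
  set B : ℕ → Set Ω := fun n => {ω | 1 ≤ volume (Prod.mk ω ⁻¹' Zset W δ n)} with hB
  have hPB : ∀ n : ℕ, ℙ (B n) ≤ ENNReal.ofReal (c * (n:ℝ) ^ (-(2:ℝ))) := by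
    intro n
    rcases Nat.eq_zero_or_pos n with h0 | hn
    · have hempty : B n = ∅ := by
        subst h0
        ext ω
        simp only [hB, Set.mem_setOf_eq, Set.mem_empty_iff_false, iff_false, not_le]
        have : Prod.mk ω ⁻¹' Zset W δ 0 = ∅ := by
          ext s
          simp only [Set.mem_preimage, Zset, Set.mem_setOf_eq, Nat.cast_zero, Set.Ioc_self,
            Set.mem_empty_iff_false, false_and, Set.mem_empty_iff_false]
        rw [this]
        simp
      rw [hempty]
      simp
    · have hn0 : (0:ℝ) < n := by exact_mod_cast hn
      have hn1 : (1:ℝ) ≤ n := by exact_mod_cast hn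
      have h1 : ℙ (B n) ≤ (∫⁻ ω, volume (Prod.mk ω ⁻¹' Zset W δ n) ∂ℙ) / 1 := by
        apply slice_markov
        · exact (measurable_measure_prodMk_left (Zset_mble hWc hWm δ n)).aemeasurable
        · exact one_ne_zero
        · exact ENNReal.one_ne_top
      rw [div_one] at h1
      refine le_trans (le_trans h1 (Z_exp hWc hWm hWi hδ hn)) (ENNReal.ofReal_le_ofReal ?_)
      -- (n:ℝ) * (√2 * exp(-(n^δ)^2/4)) ≤ c * n^(-2)
      have hx : (0:ℝ) < ((n:ℝ)^δ)^2 := by positivity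
      have hexp := exp_poly hx hK1
      have hpow : (((n:ℝ)^δ)^2 : ℝ) = (n:ℝ) ^ (2*δ) := by
        rw [← Real.rpow_natCast ((n:ℝ)^δ) 2, ← Real.rpow_mul (le_of_lt hn0)]
        norm_num
        congr 1
        ring
      have hinv : (4*(K:ℝ)/((n:ℝ)^(2*δ)))^K = (4*K)^K * ((n:ℝ)^(2*δ*K))⁻¹ := by
        rw [div_pow, ← Real.rpow_natCast ((n:ℝ)^(2*δ)) K, ← Real.rpow_mul (le_of_lt hn0)]
        rw [div_eq_mul_inv]
      rw [hpow, hinv] at hexp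
      have hmain : (n:ℝ) * (Real.sqrt 2 * Real.exp (-((n:ℝ)^δ)^2/4))
          ≤ c * ((n:ℝ) * ((n:ℝ)^(2*δ*K))⁻¹) := by
        rw [hcdef]
        calc (n:ℝ) * (Real.sqrt 2 * Real.exp (-((n:ℝ)^δ)^2/4))
            = (Real.sqrt 2 * (n:ℝ)) * Real.exp (-((n:ℝ)^δ)^2/4) := by ring
          _ ≤ (Real.sqrt 2 * (n:ℝ)) * ((4*K:ℝ)^K * ((n:ℝ)^(2*δ*K))⁻¹) := by
              apply mul_le_mul_of_nonneg_left _ (by positivity)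
              rw [show (-((n:ℝ)^δ)^2 : ℝ) = -((n:ℝ)^(2*δ)) by rw [hpow]]
              exact hexp
          _ = Real.sqrt 2 * (4*(K:ℝ))^K * ((n:ℝ) * ((n:ℝ)^(2*δ*K))⁻¹) := by ring
      refine le_trans hmain ?_
      apply mul_le_mul_of_nonneg_left _ hc
      have heq : (n:ℝ) * ((n:ℝ)^(2*δ*K))⁻¹ = (n:ℝ) ^ (1 - 2*δ*K) := by
        rw [Real.rpow_sub hn0, Real.rpow_one, div_eq_mul_inv]
      rw [heq]
      exact Real.rpow_le_rpow_of_exponent_le hn1 (by linarith)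
  have hsum : ∑' n, ℙ (B n) ≠ ⊤ := by
    refine ne_top_of_le_ne_top ?_ (ENNReal.tsum_le_tsum hPB)
    have h1 : ∀ n : ℕ, ENNReal.ofReal (c * (n:ℝ) ^ (-(2:ℝ)))
        = ENNReal.ofReal c * ENNReal.ofReal ((n:ℝ) ^ (-(2:ℝ))) := fun n =>
      ENNReal.ofReal_mul hc
    rw [tsum_congr h1, ENNReal.tsum_mul_left]
    apply ENNReal.mul_ne_top ENNReal.ofReal_ne_top
    rw [← ENNReal.ofReal_tsum_of_nonneg (fun n => Real.rpow_nonneg (Nat.cast_nonneg n) _)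
      (Real.summable_nat_rpow.2 (by norm_num))]
    exact ENNReal.ofReal_ne_top
  filter_upwards [ae_eventually_not hsum] with ω hω
  filter_upwards [hω] with n hn
  exact le_of_lt (not_le.1 hn)


lemma tsum_pos_side {Ω : Type*} (S : ℕ → Ω → ℤ) (n : ℕ) (ω : Ω) :
    ∑' j : ℕ, ((localTimeRW S (j : ℤ) n ω : ℝ))
      = (((Finset.Icc 1 n).filter fun k => 0 ≤ S k ω).card : ℝ) := by
  classical
  set J : Finset ℕ := (Finset.Icc 1 n).image fun k => (S k ω).toNat with hJ
  have hz : ∀ j ∉ J, ((localTimeRW S (j:ℤ) n ω : ℝ)) = 0 := by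
    intro j hj
    rw [localTimeRW]
    norm_cast
    rw [Finset.card_eq_zero, Finset.filter_eq_empty_iff]
    intro k hk hSk
    apply hj
    rw [hJ]
    exact Finset.mem_image.2 ⟨k, hk, by rw [hSk]; exact Int.toNat_natCast j⟩
  rw [tsum_eq_sum hz, ← Nat.cast_sum]
  congr 1
  rw [Finset.card_eq_sum_card_fiberwise
    (f := fun k => (S k ω).toNat) (t := J)
    (fun x hx => Finset.mem_image.2 ⟨x, Finset.mem_filter.1 hx |>.1, rfl⟩)]
  apply Finset.sum_congr rfl
  intro j _
  rw [localTimeRW, Finset.filter_filter]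
  congr 1
  apply Finset.filter_congr
  intro k _
  constructor
  · intro h
    rw [h]
    exact ⟨Int.natCast_nonneg j, Int.toNat_natCast j⟩
  · rintro ⟨h0, ht⟩
    rw [← Int.toNat_of_nonneg h0, ht]

lemma tsum_neg_side {Ω : Type*} (S : ℕ → Ω → ℤ) (n : ℕ) (ω : Ω) :
    ∑' j : ℕ, ((localTimeRW S (-(j : ℤ) - 1) n ω : ℝ))
      = (((Finset.Icc 1 n).filter fun k => S k ω < 0).card : ℝ) := by
  classical
  set J : Finset ℕ := (Finset.Icc 1 n).image fun k => (-(S k ω) - 1).toNat with hJ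
  have hkey : ∀ (k : ℕ) (j : ℕ), S k ω = -(j:ℤ) - 1 ↔ (S k ω < 0 ∧ (-(S k ω) - 1).toNat = j) := by
    intro k j
    constructor
    · intro h
      rw [h]
      constructor
      · have : (0:ℤ) ≤ j := Int.natCast_nonneg j
        omega
      · have : (-(-(j:ℤ) - 1) - 1) = (j:ℤ) := by ring
        rw [this]
        exact Int.toNat_natCast j
    · rintro ⟨h0, ht⟩
      have h1 : (0:ℤ) ≤ -(S k ω) - 1 := by omega
      have := Int.toNat_of_nonneg h1
      rw [ht] at this
      omega
  have hz : ∀ j ∉ J, ((localTimeRW S (-(j:ℤ) - 1) n ω : ℝ)) = 0 := by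
    intro j hj
    rw [localTimeRW]
    norm_cast
    rw [Finset.card_eq_zero, Finset.filter_eq_empty_iff]
    intro k hk hSk
    apply hj
    rw [hJ]
    exact Finset.mem_image.2 ⟨k, hk, ((hkey k j).1 hSk).2⟩
  rw [tsum_eq_sum hz, ← Nat.cast_sum]
  congr 1
  rw [Finset.card_eq_sum_card_fiberwise
    (f := fun k => (-(S k ω) - 1).toNat) (t := J)
    (fun x hx => Finset.mem_image.2 ⟨x, Finset.mem_filter.1 hx |>.1, rfl⟩)]
  apply Finset.sum_congr rfl
  intro j _
  rw [localTimeRW, Finset.filter_filter]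
  congr 1
  apply Finset.filter_congr
  intro k _
  exact hkey k j

lemma ceil_eq_of_Ioc {k : ℕ} (hk : 1 ≤ k) {s : ℝ} (hs : s ∈ Set.Ioc ((k:ℝ)-1) (k:ℝ)) :
    ⌈s⌉₊ = k := by
  rw [Nat.ceil_eq_iff (by omega)]
  constructor
  · rw [Nat.cast_sub hk, Nat.cast_one]
    exact hs.1
  · exact hs.2

lemma count_vs_leb {w : ℝ → ℝ} (hw : Continuous w) {σ : ℕ → Prop} [DecidablePred σ] {n : ℕ}
    {M : Set ℝ}
    (hM : ∀ s : ℝ, s ∈ Set.Ioc (0:ℝ) (n:ℝ) → ¬((0 ≤ w s) ↔ σ ⌈s⌉₊) → s ∈ M) :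
    |((((Finset.Icc 1 n).filter σ).card : ℝ))
        - (volume {s : ℝ | s ∈ Set.Icc (0:ℝ) (n:ℝ) ∧ 0 ≤ w s}).toReal|
      ≤ (volume (M ∩ Set.Ioc (0:ℝ) (n:ℝ))).toReal := by
  classical
  set WS : Set ℝ := {s | 0 ≤ w s} with hWS
  have hWSm : MeasurableSet WS := hw.measurable measurableSet_Ici
  set I : ℕ → Set ℝ := fun k => Set.Ioc ((k:ℝ)-1) (k:ℝ) with hI
  have hIm : ∀ k, MeasurableSet (I k) := fun k => measurableSet_Ioc
  have hIvol : ∀ k : ℕ, volume (I k) = 1 := by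
    intro k
    rw [hI]
    simp only [Real.volume_Ioc]
    norm_num
  have hIsub : ∀ k ∈ Finset.Icc 1 n, I k ⊆ Set.Ioc (0:ℝ) (n:ℝ) := by
    intro k hk s hs
    rw [Finset.mem_Icc] at hk
    have h1 : (1:ℝ) ≤ (k:ℝ) := by exact_mod_cast hk.1
    have h2 : (k:ℝ) ≤ (n:ℝ) := by exact_mod_cast hk.2
    exact ⟨by have := hs.1; linarith, le_trans hs.2 h2⟩
  have hdisj : (↑(Finset.Icc 1 n) : Set ℕ).Pairwise (Function.onFun Disjoint I) := by
    intro j _ k _ hjk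
    rcases lt_or_gt_of_ne hjk with h | h
    · apply Set.disjoint_left.2
      intro s hsj hsk
      have h1 : (j:ℝ) ≤ (k:ℝ) - 1 := by
        have : (j:ℝ) + 1 ≤ (k:ℝ) := by exact_mod_cast h
        linarith
      have := hsj.2
      have := hsk.1
      linarith
    · apply Set.disjoint_right.2
      intro s hsk hsj
      have h1 : (k:ℝ) ≤ (j:ℝ) - 1 := by
        have : (k:ℝ) + 1 ≤ (j:ℝ) := by exact_mod_cast h
        linarith
      have := hsk.2
      have := hsj.1
      linarith
  have hpart : Set.Ioc (0:ℝ) (n:ℝ) = ⋃ k ∈ Finset.Icc 1 n, I k := by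
    ext s
    constructor
    · intro hs
      have hk1 : 1 ≤ ⌈s⌉₊ := Nat.one_le_ceil_iff.2 hs.1
      have hkn : ⌈s⌉₊ ≤ n := Nat.ceil_le.2 hs.2
      refine Set.mem_biUnion (Finset.mem_Icc.2 ⟨hk1, hkn⟩) ?_
      rw [hI]
      constructor
      · have h2 : (⌈s⌉₊ : ℝ) < s + 1 := Nat.ceil_lt_add_one hs.1.le
        linarith
      · exact Nat.le_ceil s
    · intro hs
      obtain ⟨k, hk, hsk⟩ := Set.mem_iUnion₂.1 hs
      exact hIsub k hk hsk
  -- decompose the W-occupation set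
  have hsetP : {s : ℝ | s ∈ Set.Icc (0:ℝ) (n:ℝ) ∧ 0 ≤ w s} = WS ∩ Set.Icc (0:ℝ) (n:ℝ) := by
    ext s; simp [hWS, and_comm]
  have hIccIoc : volume (WS ∩ Set.Icc (0:ℝ) (n:ℝ)) = volume (WS ∩ Set.Ioc (0:ℝ) (n:ℝ)) := by
    apply le_antisymm
    · calc volume (WS ∩ Set.Icc (0:ℝ) (n:ℝ))
          ≤ volume ((WS ∩ Set.Ioc (0:ℝ) (n:ℝ)) ∪ {0}) := by
            apply measure_mono
            intro s hs
            rcases eq_or_lt_of_le hs.2.1 with h | h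
            · right; exact Set.mem_singleton_iff.2 h.symm
            · left; exact ⟨hs.1, h, hs.2.2⟩
        _ ≤ volume (WS ∩ Set.Ioc (0:ℝ) (n:ℝ)) + volume ({0} : Set ℝ) := measure_union_le _ _
        _ = volume (WS ∩ Set.Ioc (0:ℝ) (n:ℝ)) := by rw [Real.volume_singleton, add_zero]
    · exact measure_mono (Set.inter_subset_inter_right _ Set.Ioc_subset_Icc_self)
  have hWSsum : volume (WS ∩ Set.Ioc (0:ℝ) (n:ℝ)) = ∑ k ∈ Finset.Icc 1 n, volume (WS ∩ I k) := by
    rw [hpart, Set.inter_iUnion₂]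
    exact measure_biUnion_finset (hdisj.mono' (fun j k h => h.mono Set.inter_subset_right Set.inter_subset_right))
      (fun k _ => hWSm.inter (hIm k))
  -- the per-interval bad sets
  set Bad : ℕ → Set ℝ := fun k => I k ∩ (if σ k then WSᶜ else WS) with hBad
  have hBadm : ∀ k, MeasurableSet (Bad k) := by
    intro k
    apply (hIm k).inter
    by_cases h : σ k
    · simp only [if_pos h]; exact hWSm.compl
    · simp only [if_neg h]; exact hWSm
  have hBadsub : ∀ k ∈ Finset.Icc 1 n, Bad k ⊆ M ∩ Set.Ioc (0:ℝ) (n:ℝ) := by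
    intro k hk s hs
    have hsIoc : s ∈ Set.Ioc (0:ℝ) (n:ℝ) := hIsub k hk hs.1
    have hk1 : 1 ≤ k := (Finset.mem_Icc.1 hk).1
    have hceil : ⌈s⌉₊ = k := ceil_eq_of_Ioc hk1 hs.1
    refine ⟨hM s hsIoc ?_, hsIoc⟩
    rw [hceil]
    have hs2 : s ∈ (if σ k then WSᶜ else WS) := hs.2
    by_cases h : σ k
    · rw [if_pos h] at hs2
      intro hiff
      exact hs2 (hiff.2 h)
    · rw [if_neg h] at hs2
      intro hiff
      exact h (hiff.1 hs2)
  have hfinI : ∀ k, volume (WS ∩ I k) ≠ ⊤ := by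
    intro k
    refine ne_top_of_le_ne_top ?_ (measure_mono Set.inter_subset_right)
    rw [hIvol k]; exact ENNReal.one_ne_top
  have hfinBad : ∀ k, volume (Bad k) ≠ ⊤ := by
    intro k
    refine ne_top_of_le_ne_top ?_ (measure_mono Set.inter_subset_left)
    rw [hIvol k]; exact ENNReal.one_ne_top
  have hfinM : volume (M ∩ Set.Ioc (0:ℝ) (n:ℝ)) ≠ ⊤ := by
    refine ne_top_of_le_ne_top ?_ (measure_mono Set.inter_subset_right)
    rw [Real.volume_Ioc]; exact ENNReal.ofReal_ne_top
  -- real-valued quantities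
  set p : ℕ → ℝ := fun k => (volume (WS ∩ I k)).toReal with hp
  set m : ℕ → ℝ := fun k => (volume (Bad k)).toReal with hm
  have hperk : ∀ k ∈ Finset.Icc 1 n, |(if σ k then (1:ℝ) else 0) - p k| ≤ m k := by
    intro k _
    by_cases h : σ k
    · rw [if_pos h]
      have hBadk : Bad k = I k ∩ WSᶜ := by simp only [hBad, if_pos h]
      have hsum : volume (WS ∩ I k) + volume (Bad k) = 1 := by
        rw [hBadk, Set.inter_comm WS (I k), ← Set.diff_eq, measure_inter_add_diff _ hWSm]
        exact hIvol k
      have hreal : p k + m k = 1 := by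
        have := congrArg ENNReal.toReal hsum
        rwa [ENNReal.toReal_add (hfinI k) (hfinBad k), ENNReal.toReal_one] at this
      have hple : 0 ≤ p k := ENNReal.toReal_nonneg
      have hmle : 0 ≤ m k := ENNReal.toReal_nonneg
      rw [abs_of_nonneg (by linarith)]
      linarith
    · rw [if_neg h]
      have hBadk : Bad k = I k ∩ WS := by simp only [hBad, if_neg h]
      have hmp : m k = p k := by
        simp only [hm, hp, hBadk, Set.inter_comm]
      have hple : 0 ≤ p k := ENNReal.toReal_nonneg
      rw [abs_of_nonpos (by linarith), hmp]
      linarith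
  -- summing up
  have hcard : ((((Finset.Icc 1 n).filter σ).card : ℝ)) = ∑ k ∈ Finset.Icc 1 n, (if σ k then (1:ℝ) else 0) := by
    rw [Finset.card_filter, Nat.cast_sum]
    apply Finset.sum_congr rfl
    intro k _
    split <;> simp
  have hPsum : (volume {s : ℝ | s ∈ Set.Icc (0:ℝ) (n:ℝ) ∧ 0 ≤ w s}).toReal
      = ∑ k ∈ Finset.Icc 1 n, p k := by
    rw [hsetP, hIccIoc, hWSsum, ENNReal.toReal_sum (fun k _ => hfinI k)]
  have hMsum : ∑ k ∈ Finset.Icc 1 n, m k ≤ (volume (M ∩ Set.Ioc (0:ℝ) (n:ℝ))).toReal := by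
    have h1 : ∑ k ∈ Finset.Icc 1 n, volume (Bad k) = volume (⋃ k ∈ Finset.Icc 1 n, Bad k) :=
      (measure_biUnion_finset (hdisj.mono' (fun j k h => h.mono Set.inter_subset_left Set.inter_subset_left))
        (fun k _ => hBadm k)).symm
    have h2 : volume (⋃ k ∈ Finset.Icc 1 n, Bad k) ≤ volume (M ∩ Set.Ioc (0:ℝ) (n:ℝ)) := by
      apply measure_mono
      exact Set.iUnion₂_subset hBadsub
    calc ∑ k ∈ Finset.Icc 1 n, m k
        = (∑ k ∈ Finset.Icc 1 n, volume (Bad k)).toReal :=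
          (ENNReal.toReal_sum (fun k _ => hfinBad k)).symm
      _ ≤ (volume (M ∩ Set.Ioc (0:ℝ) (n:ℝ))).toReal := by
          rw [h1]
          exact ENNReal.toReal_mono hfinM h2
  calc |((((Finset.Icc 1 n).filter σ).card : ℝ))
        - (volume {s : ℝ | s ∈ Set.Icc (0:ℝ) (n:ℝ) ∧ 0 ≤ w s}).toReal|
      = |∑ k ∈ Finset.Icc 1 n, ((if σ k then (1:ℝ) else 0) - p k)| := by
        rw [Finset.sum_sub_distrib, ← hcard, ← hPsum]
    _ ≤ ∑ k ∈ Finset.Icc 1 n, |(if σ k then (1:ℝ) else 0) - p k| :=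
        Finset.abs_sum_le_sum_abs _ _
    _ ≤ ∑ k ∈ Finset.Icc 1 n, m k := Finset.sum_le_sum hperk
    _ ≤ (volume (M ∩ Set.Ioc (0:ℝ) (n:ℝ))).toReal := hMsum

end AuxLemmas

set_option maxHeartbeats 1000000 in
/-- **Lemma J.** Let `γ₁, γ₂ ≥ 1`. Suppose a probability space carries a simple symmetric
random walk `S` with local time `ξ` and a standard Wiener process `W` with local time
process `η` (occupation density), such that `|S(n) - W(n)| = O(n^{1/4+ε})` and
`sup_{x∈ℤ} |ξ(x,n) - η(x,n)| = O(n^{1/4+ε})` a.s. for every `ε > 0`. Then for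
`Â(n) = γ₁ Σ_{j≥0} ξ(j,n) + γ₂ Σ_{j≥1} ξ(-j,n)` and
`A(n) = γ₁ Leb{s ∈ [0,n] : W(s) ≥ 0} + γ₂ Leb{s ∈ [0,n] : W(s) < 0}`, for every `ε > 0`,
almost surely `|Â(n) - A(n)| = O(n^{3/4+ε})`. -/
theorem Ahat_A_approx
    {Ω : Type*} [MeasureSpace Ω] [IsProbabilityMeasure (ℙ : Measure Ω)]
    (γ1 γ2 : ℝ) (hγ1 : 1 ≤ γ1) (hγ2 : 1 ≤ γ2)
    (S : ℕ → Ω → ℤ) (hS : IsSSRW S)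
    (W : ℝ → Ω → ℝ) (hW : IsStandardWiener W)
    (η : ℝ → ℝ → Ω → ℝ)
    (hη : ∀ ω, ∀ t : ℝ, 0 ≤ t → ∀ f : ℝ → ℝ, Measurable f → (∃ c : ℝ, ∀ x, |f x| ≤ c) →
      (∫ s in Set.Icc (0 : ℝ) t, f (W s ω)) = ∫ x : ℝ, f x * η x t ω)
    (hSW : ∀ ε > (0 : ℝ), ∀ᵐ ω ∂(ℙ : Measure Ω),
      (fun n : ℕ => (S n ω : ℝ) - W (n : ℝ) ω) =O[atTop]
        fun n : ℕ => (n : ℝ) ^ (1/4 + ε))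
    (hξη : ∀ ε > (0 : ℝ), ∀ᵐ ω ∂(ℙ : Measure Ω), ∃ c : ℝ, ∀ᶠ n : ℕ in atTop, ∀ x : ℤ,
      |(localTimeRW S x n ω : ℝ) - η (x : ℝ) (n : ℝ) ω| ≤ c * (n : ℝ) ^ (1/4 + ε)) :
    ∀ ε > (0 : ℝ), ∀ᵐ ω ∂(ℙ : Measure Ω),
      (fun n : ℕ =>
          |(γ1 * ∑' j : ℕ, (localTimeRW S (j : ℤ) n ω : ℝ) +
            γ2 * ∑' j : ℕ, (localTimeRW S (-(j : ℤ) - 1) n ω : ℝ)) -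
            A2fun γ1 γ2 (fun s => W s ω) (n : ℝ)|)
        =O[atTop] fun n : ℕ => (n : ℝ) ^ (3/4 + ε) := by
  classical
  obtain ⟨hWc, hW0, hWm, hWi, _⟩ := hW
  intro ε hε
  set δ : ℝ := ε/3 with hδdef
  have hδ : 0 < δ := by positivity
  filter_upwards [Ybound hWc hW0 hWm hWi hδ, Zbound hWc hWm hWi hδ, hSW δ hδ]
    with ω hYω hZω hCω
  -- a uniform coupling constant for all k ≥ 1
  rw [Asymptotics.isBigO_iff] at hCω
  obtain ⟨c0, hc0⟩ := hCω
  obtain ⟨N₀, hN₀⟩ := eventually_atTop.1 hc0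
  set C₂ : ℝ := |c0| + ∑ k ∈ Finset.range N₀, |(S k ω : ℝ) - W (k:ℝ) ω| + 1 with hC2
  have hsumnn : 0 ≤ ∑ k ∈ Finset.range N₀, |(S k ω : ℝ) - W (k:ℝ) ω| :=
    Finset.sum_nonneg fun i _ => abs_nonneg _
  have hC2pos : 0 < C₂ := by
    have := abs_nonneg c0
    rw [hC2]; linarith
  have hC2bound : ∀ k : ℕ, 1 ≤ k →
      |(S k ω : ℝ) - W (k:ℝ) ω| ≤ C₂ * (k:ℝ) ^ ((1:ℝ)/4 + δ) := by
    intro k hk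
    have hk1 : (1:ℝ) ≤ (k:ℝ) ^ ((1:ℝ)/4 + δ) :=
      one_le_rpow' (by exact_mod_cast hk) (by linarith)
    have hknn : (0:ℝ) ≤ (k:ℝ) ^ ((1:ℝ)/4 + δ) := by linarith
    rcases le_or_gt N₀ k with h | h
    · have h1 := hN₀ k h
      rw [Real.norm_eq_abs, Real.norm_eq_abs] at h1
      calc |(S k ω : ℝ) - W (k:ℝ) ω| ≤ c0 * |(k:ℝ) ^ ((1:ℝ)/4 + δ)| := by
            convert h1 using 3 <;> norm_num
        _ ≤ C₂ * (k:ℝ) ^ ((1:ℝ)/4 + δ) := by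
            rw [abs_of_nonneg hknn]
            apply mul_le_mul_of_nonneg_right _ hknn
            have := le_abs_self c0
            rw [hC2]; linarith
    · have hmem : k ∈ Finset.range N₀ := Finset.mem_range.2 h
      have h1 : |(S k ω : ℝ) - W (k:ℝ) ω|
          ≤ ∑ i ∈ Finset.range N₀, |(S i ω : ℝ) - W (i:ℝ) ω| :=
        Finset.single_le_sum (f := fun i => |(S i ω : ℝ) - W (i:ℝ) ω|)
          (fun i _ => abs_nonneg _) hmem
      have h2 : |(S k ω : ℝ) - W (k:ℝ) ω| ≤ C₂ := by
        have := abs_nonneg c0; rw [hC2]; linarith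
      calc |(S k ω : ℝ) - W (k:ℝ) ω| ≤ C₂ := h2
        _ = C₂ * 1 := (mul_one _).symm
        _ ≤ C₂ * (k:ℝ) ^ ((1:ℝ)/4 + δ) := by
            apply mul_le_mul_of_nonneg_left hk1 hC2pos.le
  have hev1 : ∀ᶠ n : ℕ in atTop, (C₂ + 1) ≤ (n:ℝ) ^ δ := by
    have h1 : Tendsto (fun n : ℕ => (n:ℝ) ^ δ) atTop atTop :=
      (_root_.tendsto_rpow_atTop hδ).comp tendsto_natCast_atTop_atTop
    exact h1.eventually_ge_atTop _
  rw [Asymptotics.isBigO_iff]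
  refine ⟨(γ1 + γ2) * ((2:ℝ) ^ ((3:ℝ)/4 + 3*δ) + 1), ?_⟩
  filter_upwards [hYω, hZω, hev1, eventually_ge_atTop 1] with n hYn hZn hevn hn1
  have hn1' : (1:ℝ) ≤ (n:ℝ) := by exact_mod_cast hn1
  have hn0 : (0:ℝ) < (n:ℝ) := by linarith
  -- the bad set
  set M : Set ℝ := (Prod.mk ω ⁻¹' Yset W δ n) ∪ (Prod.mk ω ⁻¹' Zset W δ n) with hMdef
  have hMvol : (volume (M ∩ Set.Ioc (0:ℝ) (n:ℝ))).toReal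
      ≤ (2:ℝ) ^ ((3:ℝ)/4 + 3*δ) * (n:ℝ) ^ ((3:ℝ)/4 + 3*δ) + 1 := by
    have h1 : volume (M ∩ Set.Ioc (0:ℝ) (n:ℝ))
        ≤ volume (Prod.mk ω ⁻¹' Yset W δ n) + volume (Prod.mk ω ⁻¹' Zset W δ n) :=
      le_trans (measure_mono Set.inter_subset_left) (measure_union_le _ _)
    have h2 : volume (M ∩ Set.Ioc (0:ℝ) (n:ℝ))
        ≤ ENNReal.ofReal ((2:ℝ) ^ ((3:ℝ)/4 + 3*δ) * (n:ℝ) ^ ((3:ℝ)/4 + 3*δ)) + 1 :=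
      le_trans h1 (add_le_add hYn hZn)
    apply ENNReal.toReal_le_of_le_ofReal (by positivity)
    rw [ENNReal.ofReal_add (by positivity) (by norm_num : (0:ℝ) ≤ 1), ENNReal.ofReal_one]
    exact h2
  -- mismatch analysis
  have harith : C₂ * (n:ℝ) ^ ((1:ℝ)/4 + δ) + (n:ℝ) ^ δ ≤ (n:ℝ) ^ ((1:ℝ)/4 + 2*δ) := by
    have e1 : (n:ℝ) ^ ((1:ℝ)/4 + 2*δ) = (n:ℝ) ^ ((1:ℝ)/4 + δ) * (n:ℝ) ^ δ := by
      rw [show (1:ℝ)/4 + 2*δ = ((1:ℝ)/4 + δ) + δ by ring, Real.rpow_add hn0]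
    have e2 : (n:ℝ) ^ δ ≤ (n:ℝ) ^ ((1:ℝ)/4 + δ) :=
      Real.rpow_le_rpow_of_exponent_le hn1' (by linarith)
    have e4 : (0:ℝ) ≤ (n:ℝ) ^ ((1:ℝ)/4 + δ) := Real.rpow_nonneg hn0.le _
    have e5 : (C₂ + 1) * (n:ℝ) ^ ((1:ℝ)/4 + δ) ≤ (n:ℝ) ^ δ * (n:ℝ) ^ ((1:ℝ)/4 + δ) :=
      mul_le_mul_of_nonneg_right hevn e4
    nlinarith
  have hmis : ∀ s : ℝ, s ∈ Set.Ioc (0:ℝ) (n:ℝ) →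
      ¬((0 ≤ W s ω) ↔ (0 ≤ S ⌈s⌉₊ ω)) → s ∈ M := by
    intro s hs hns
    by_contra hsM
    rw [hMdef, Set.mem_union] at hsM
    push_neg at hsM
    obtain ⟨hsY, hsZ⟩ := hsM
    have hYlt : (n:ℝ) ^ ((1:ℝ)/4 + 2*δ) < |W s ω| := by
      by_contra h
      exact hsY ⟨hs, not_lt.1 h⟩
    have hZlt : |W s ω - W (⌈s⌉₊:ℝ) ω| < (n:ℝ) ^ δ := by
      by_contra h
      exact hsZ ⟨hs, not_lt.1 h⟩
    have hk1 : 1 ≤ ⌈s⌉₊ := Nat.one_le_ceil_iff.2 hs.1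
    have hkn : ⌈s⌉₊ ≤ n := Nat.ceil_le.2 hs.2
    have hco := hC2bound ⌈s⌉₊ hk1
    have hkr : ((⌈s⌉₊:ℕ):ℝ) ^ ((1:ℝ)/4 + δ) ≤ (n:ℝ) ^ ((1:ℝ)/4 + δ) :=
      Real.rpow_le_rpow (Nat.cast_nonneg _) (by exact_mod_cast hkn) (by linarith)
    have hco' : |(S ⌈s⌉₊ ω : ℝ) - W (⌈s⌉₊:ℝ) ω| ≤ C₂ * (n:ℝ) ^ ((1:ℝ)/4 + δ) :=
      le_trans hco (mul_le_mul_of_nonneg_left hkr hC2pos.le)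
    apply hns
    rcases le_or_gt 0 (W s ω) with hws | hws
    · have hWs : (n:ℝ) ^ ((1:ℝ)/4 + 2*δ) < W s ω := by rwa [abs_of_nonneg hws] at hYlt
      have hWk : W s ω - (n:ℝ) ^ δ < W (⌈s⌉₊:ℝ) ω := by
        have h := (abs_lt.1 hZlt).2
        linarith
      have hSk : (0:ℝ) < (S ⌈s⌉₊ ω : ℝ) := by
        have h := (abs_le.1 hco').1
        linarith
      have : (0:ℤ) ≤ S ⌈s⌉₊ ω := by exact_mod_cast hSk.le
      exact iff_of_true hws this
    · have hWs : W s ω < -((n:ℝ) ^ ((1:ℝ)/4 + 2*δ)) := by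
        rw [abs_of_neg hws] at hYlt
        linarith
      have hWk : W (⌈s⌉₊:ℝ) ω < W s ω + (n:ℝ) ^ δ := by
        have h := (abs_lt.1 hZlt).1
        linarith
      have hSk : (S ⌈s⌉₊ ω : ℝ) < 0 := by
        have h := (abs_le.1 hco').2
        linarith
      have : ¬ (0 ≤ S ⌈s⌉₊ ω) := by
        rw [not_le]
        exact_mod_cast hSk
      exact iff_of_false (not_le.2 hws) this
  -- the two comparisons
  have hcount := count_vs_leb (w := fun s => W s ω) (hWc ω)
    (σ := fun k => 0 ≤ S k ω) (M := M) hmis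
  set D1 : ℝ := (((Finset.Icc 1 n).filter fun k => 0 ≤ S k ω).card : ℝ) with hD1
  set P1 : ℝ := (volume {s : ℝ | s ∈ Set.Icc (0:ℝ) (n:ℝ) ∧ 0 ≤ W s ω}).toReal with hP1
  set V : ℝ := (volume (M ∩ Set.Ioc (0:ℝ) (n:ℝ))).toReal with hV
  -- complements
  have hcards : D1 + (((Finset.Icc 1 n).filter fun k => S k ω < 0).card : ℝ) = n := by
    rw [hD1]
    have h1 : ((Finset.Icc 1 n).filter fun k => S k ω < 0)
        = ((Finset.Icc 1 n).filter fun k => ¬ (0 ≤ S k ω)) := by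
      apply Finset.filter_congr
      intro k _
      exact (not_le).symm
    rw [h1]
    have h2 := Finset.card_filter_add_card_filter_not
      (s := Finset.Icc 1 n) (p := fun k => 0 ≤ S k ω)
    have h3 : (Finset.Icc 1 n).card = n := by rw [Nat.card_Icc]; omega
    rw [h3] at h2
    exact_mod_cast congrArg (Nat.cast (R := ℝ)) h2
  have hWSm' : MeasurableSet {s : ℝ | 0 ≤ W s ω} := (hWc ω).measurable measurableSet_Ici
  have hlebs : P1 + (volume {s : ℝ | s ∈ Set.Icc (0:ℝ) (n:ℝ) ∧ W s ω < 0}).toReal = n := by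
    have e5 : {s : ℝ | s ∈ Set.Icc (0:ℝ) (n:ℝ) ∧ W s ω < 0}
        = Set.Icc (0:ℝ) (n:ℝ) \ {s : ℝ | 0 ≤ W s ω} := by
      ext s
      simp only [Set.mem_setOf_eq, Set.mem_diff, not_le]
    have e6 : {s : ℝ | s ∈ Set.Icc (0:ℝ) (n:ℝ) ∧ 0 ≤ W s ω}
        = Set.Icc (0:ℝ) (n:ℝ) ∩ {s : ℝ | 0 ≤ W s ω} := by
      ext s
      simp only [Set.mem_setOf_eq, Set.mem_inter_iff]
    have e7 := measure_inter_add_diff (μ := volume) (Set.Icc (0:ℝ) (n:ℝ)) hWSm'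
    rw [hP1, e5, e6]
    have hfin1 : volume (Set.Icc (0:ℝ) (n:ℝ) ∩ {s : ℝ | 0 ≤ W s ω}) ≠ ⊤ :=
      ne_top_of_le_ne_top (by rw [Real.volume_Icc]; exact ENNReal.ofReal_ne_top)
        (measure_mono Set.inter_subset_left)
    have hfin2 : volume (Set.Icc (0:ℝ) (n:ℝ) \ {s : ℝ | 0 ≤ W s ω}) ≠ ⊤ :=
      ne_top_of_le_ne_top (by rw [Real.volume_Icc]; exact ENNReal.ofReal_ne_top)
        (measure_mono Set.diff_subset)
    have := congrArg ENNReal.toReal e7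
    rw [ENNReal.toReal_add hfin1 hfin2, Real.volume_Icc, sub_zero,
      ENNReal.toReal_ofReal hn0.le] at this
    exact this
  -- final computation
  rw [tsum_pos_side, tsum_neg_side]
  simp only [A2fun]
  rw [Real.norm_eq_abs, Real.norm_eq_abs, abs_abs]
  have hP2 : (volume {s : ℝ | s ∈ Set.Icc (0:ℝ) (n:ℝ) ∧ W s ω < 0}).toReal = (n:ℝ) - P1 := by
    linarith
  have hD2 : (((Finset.Icc 1 n).filter fun k => S k ω < 0).card : ℝ) = (n:ℝ) - D1 := by
    linarith
  rw [hP2, hD2]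
  have hexpr : γ1 * D1 + γ2 * ((n:ℝ) - D1) - (γ1 * P1 + γ2 * ((n:ℝ) - P1))
      = (γ1 - γ2) * (D1 - P1) := by ring
  rw [hexpr, abs_mul]
  have hb1 : |γ1 - γ2| ≤ γ1 + γ2 := by
    rw [abs_le]; constructor <;> linarith
  have hVb : V ≤ (2:ℝ) ^ ((3:ℝ)/4 + 3*δ) * (n:ℝ) ^ ((3:ℝ)/4 + 3*δ) + 1 := hMvol
  have hnb : (1:ℝ) ≤ (n:ℝ) ^ ((3:ℝ)/4 + 3*δ) := one_le_rpow' hn1' (by linarith)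
  have he3 : (3:ℝ)/4 + 3*δ = 3/4 + ε := by rw [hδdef]; ring
  have habs : |D1 - P1| ≤ V := hcount
  have hVnn : 0 ≤ V := ENNReal.toReal_nonneg
  have h1 : |γ1 - γ2| * |D1 - P1| ≤ (γ1 + γ2) * V := by
    apply mul_le_mul hb1 habs (abs_nonneg _) (by linarith)
  have h2 : (γ1 + γ2) * V
      ≤ (γ1 + γ2) * (((2:ℝ) ^ ((3:ℝ)/4 + 3*δ) + 1) * (n:ℝ) ^ ((3:ℝ)/4 + 3*δ)) := by
    apply mul_le_mul_of_nonneg_left _ (by linarith)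
    have h3 : (2:ℝ) ^ ((3:ℝ)/4 + 3*δ) * (n:ℝ) ^ ((3:ℝ)/4 + 3*δ) + 1
        ≤ ((2:ℝ) ^ ((3:ℝ)/4 + 3*δ) + 1) * (n:ℝ) ^ ((3:ℝ)/4 + 3*δ) := by
      have h4 : (0:ℝ) ≤ (2:ℝ) ^ ((3:ℝ)/4 + 3*δ) := Real.rpow_nonneg (by norm_num) _
      nlinarith [hnb, h4]
    linarith
  rw [abs_of_nonneg (Real.rpow_nonneg hn0.le _), ← he3]
  calc |γ1 - γ2| * |D1 - P1| ≤ (γ1 + γ2) * V := h1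
    _ ≤ (γ1 + γ2) * (((2:ℝ) ^ ((3:ℝ)/4 + 3*δ) + 1) * (n:ℝ) ^ ((3:ℝ)/4 + 3*δ)) := h2
    _ = (γ1 + γ2) * ((2:ℝ) ^ ((3:ℝ)/4 + 3*δ) + 1) * (n:ℝ) ^ ((3:ℝ)/4 + 3*δ) := by ring

end
end
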